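/- arXiv:math/0208075 — 13 statements merged into one kernel-verified Lean document; each statement's English description precedes it below -/
import Mathlib

section
/- Let B be the n×n matrix over F with entries: B_{ij} = 0 if j − i > 1; B_{i,i+1} = −1/c_i for 1 ≤ i ≤ n−1; B_{11} = k_2/(k_1 c_1); B_{nn} = b_{n−1}/(c_{n−1} c_n); B_{ii} = (k_{i+1} b_{i−1} − k_{i−1} a_{i−1})/(c_{i−1} c_i) for 2 ≤ i ≤ n−1; and B_{ij} = (−1)^{i+j} d_{j−1} g_i (∏_{ν=j+1}^{i−1} k_ν f_ν) / (∏_{ν=j−1}^{i} c_ν) for i − j ≥ 1, where the product over an empty index range equals 1. Assume k_1 ≠ 0 and c_i ≠ 0 for i = 1,…,n. Then A_1 · B = I, the n×n identity matrix. -/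
section Aux
variable {F : Type*} [Field F]

/-- 0-based entry of the matrix `B` (mirrors `hB` exactly). -/
def Bent (n : ℕ) (a b k c d f g : ℕ → F) (t s : ℕ) : F :=
  if s + 1 > t + 1 + 1 then 0
  else if s + 1 = t + 1 + 1 then -1 / c (t + 1)
  else if t = s then
    (if t + 1 = 1 then k 2 / (k 1 * c 1)
     else if t + 1 = n then b (n - 1) / (c (n - 1) * c n)
     else (k (t + 2) * b t - k t * a t) / (c t * c (t + 1)))
  else (-1 : F) ^ ((t + 1) + (s + 1)) * d s * g (t + 1) *
    (∏ ν ∈ Finset.Icc (s + 2) t, k ν * f ν) /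
    ∏ ν ∈ Finset.Icc s (t + 1), c ν

/-- Closed form of tail sums. -/
def went (c d k f : ℕ → F) (l m : ℕ) : F :=
  (-1 : F) ^ (m + l) * d l * (∏ ν ∈ Finset.Icc (l + 2) m, k ν * f ν) /
    ∏ ν ∈ Finset.Icc l m, c ν

variable {n : ℕ} {a b k c d f g : ℕ → F}

lemma Bent_zero {t s : ℕ} (h : t + 2 ≤ s) : Bent n a b k c d f g t s = 0 := by
  rw [Bent, if_pos (by omega)]

lemma Bent_super {t : ℕ} : Bent n a b k c d f g t (t + 1) = -1 / c (t + 1) := by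
  rw [Bent, if_neg (by omega), if_pos (by omega)]

lemma Bent_diag0 : Bent n a b k c d f g 0 0 = k 2 / (k 1 * c 1) := by
  rw [Bent, if_neg (by omega), if_neg (by omega), if_pos rfl, if_pos rfl]

lemma Bent_diagn {t : ℕ} (h : t + 1 = n) (h2 : 1 ≤ t) :
    Bent n a b k c d f g t t = b (n - 1) / (c (n - 1) * c n) := by
  rw [Bent, if_neg (by omega), if_neg (by omega), if_pos rfl, if_neg (by omega), if_pos h]

lemma Bent_diagm {t : ℕ} (h1 : 1 ≤ t) (h2 : t + 1 < n) :
    Bent n a b k c d f g t t = (k (t + 2) * b t - k t * a t) / (c t * c (t + 1)) := by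
  rw [Bent, if_neg (by omega), if_neg (by omega), if_pos rfl, if_neg (by omega),
    if_neg (by omega)]

lemma Bent_off {t s : ℕ} (h : s < t) :
    Bent n a b k c d f g t s = (-1 : F) ^ ((t + 1) + (s + 1)) * d s * g (t + 1) *
      (∏ ν ∈ Finset.Icc (s + 2) t, k ν * f ν) /
      ∏ ν ∈ Finset.Icc s (t + 1), c ν := by
  rw [Bent, if_neg (by omega), if_neg (by omega), if_neg (by omega)]

end Aux

/-- With `A₁` the Brownian-type matrix `(A₁)_{ij} = kᵢbⱼ (i ≤ j)`,
`kⱼaⱼ (i > j)` (1-based), and `B` the lower Hessenberg matrix of formulae (3),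
assuming `k₁ ≠ 0` and `cᵢ ≠ 0` for `i = 1,…,n`, we have `A₁ * B = 1`. -/
theorem stmt_0 {F : Type*} [Field F] {n : ℕ} (hn : 3 ≤ n)
    (a b k c d f g : ℕ → F)
    (A₁ B : Matrix (Fin n) (Fin n) F)
    (hA : ∀ i j : Fin n, A₁ i j =
      if (i : ℕ) ≤ (j : ℕ) then k ((i : ℕ) + 1) * b ((j : ℕ) + 1)
      else k ((j : ℕ) + 1) * a ((j : ℕ) + 1))
    (hc0 : c 0 = 1)
    (hc : ∀ i : ℕ, 1 ≤ i → i ≤ n - 1 → c i = k (i + 1) * b i - k i * a i)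
    (hcn : c n = b n)
    (hd0 : d 0 = a 1)
    (hd : ∀ i : ℕ, 1 ≤ i → i ≤ n - 2 →
      d i = k (i + 1) * a (i + 1) * b i - k i * a i * b (i + 1))
    (hf : ∀ i : ℕ, 2 ≤ i → i ≤ n - 1 → f i = a i - b i)
    (hg : ∀ i : ℕ, 2 ≤ i → i ≤ n - 1 → g i = k (i + 1) - k i)
    (hgn : g n = 1)
    (hB : ∀ i j : Fin n, B i j =
      if ((j : ℕ) + 1) > ((i : ℕ) + 1) + 1 then 0
      else if ((j : ℕ) + 1) = ((i : ℕ) + 1) + 1 then -1 / c ((i : ℕ) + 1)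
      else if (i : ℕ) = (j : ℕ) then
        (if (i : ℕ) + 1 = 1 then k 2 / (k 1 * c 1)
         else if (i : ℕ) + 1 = n then b (n - 1) / (c (n - 1) * c n)
         else (k ((i : ℕ) + 2) * b (i : ℕ) - k (i : ℕ) * a (i : ℕ)) /
           (c (i : ℕ) * c ((i : ℕ) + 1)))
      else (-1 : F) ^ (((i : ℕ) + 1) + ((j : ℕ) + 1)) * d (j : ℕ) * g ((i : ℕ) + 1) *
        (∏ ν ∈ Finset.Icc ((j : ℕ) + 2) (i : ℕ), k ν * f ν) /
        ∏ ν ∈ Finset.Icc (j : ℕ) ((i : ℕ) + 1), c ν)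
    (hk1 : k 1 ≠ 0)
    (hcne : ∀ i : ℕ, 1 ≤ i → i ≤ n → c i ≠ 0) :
    A₁ * B = 1 := by
  have hcall : ∀ ν, ν ≤ n → c ν ≠ 0 := by
    intro ν hν
    rcases Nat.eq_zero_or_pos ν with h | h
    · subst h; rw [hc0]; exact one_ne_zero
    · exact hcne ν h hν
  have hprod : ∀ lo hi, hi ≤ n → (∏ ν ∈ Finset.Icc lo hi, c ν) ≠ 0 := by
    intro lo hi h
    rw [Finset.prod_ne_zero_iff]
    intro ν hν
    exact hcall ν (le_trans (Finset.mem_Icc.mp hν).2 h)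
  ext i l
  rw [Matrix.mul_apply, Matrix.one_apply]
  set ℓ := (l : ℕ) with hℓdef
  have hl : ℓ < n := l.isLt
  set W : ℕ → F := went c d k f ℓ with hW
  -- value of W (ℓ+1)
  have hWl1 : ℓ + 2 ≤ n → W (ℓ + 1) = -(d ℓ / (c ℓ * c (ℓ + 1))) := by
    intro _h
    rw [hW]
    simp only [went]
    rw [Finset.Icc_eq_empty (by omega), Finset.prod_empty,
      Finset.prod_Icc_succ_top (by omega : ℓ ≤ ℓ + 1), Finset.Icc_self, Finset.prod_singleton]
    have hs : (-1 : F) ^ (ℓ + 1 + ℓ) = -1 := Odd.neg_one_pow ⟨ℓ, by ring⟩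
    rw [hs]
    ring
  -- step lemma for the b-terms
  have stepV : ∀ t, ℓ + 1 ≤ t → t + 2 ≤ n →
      b (t + 1) * Bent n a b k c d f g t ℓ = W t - W (t + 1) := by
    intro t h1 h2
    rw [Bent_off (by omega), hW]
    simp only [went]
    rw [Finset.prod_Icc_succ_top (by omega : ℓ ≤ t + 1),
      Finset.prod_Icc_succ_top (by omega : ℓ + 2 ≤ t + 1),
      hg (t + 1) (by omega) (by omega), hf (t + 1) (by omega) (by omega),
      hc (t + 1) (by omega) (by omega)]
    have hQ : (∏ ν ∈ Finset.Icc ℓ t, c ν) ≠ 0 := hprod ℓ t (by omega)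
    have hct : (k (t + 1 + 1) * b (t + 1) - k (t + 1) * a (t + 1)) ≠ 0 := by
      rw [← hc (t + 1) (by omega) (by omega)]
      exact hcne (t + 1) (by omega) (by omega)
    have hX : b (t + 1) * k (t + 1 + 1) - k (t + 1) * a (t + 1) ≠ 0 := fun h => hct (by linear_combination h)
    rw [← hc (t + 1) (by omega) (by omega)]
    have hct' : c (t + 1) ≠ 0 := hcne (t + 1) (by omega) (by omega)
    field_simp
    rw [hc (t + 1) (by omega) (by omega)]
    ring
  -- top lemma for the b-terms
  have topV : ∀ t, t + 1 = n → ℓ + 1 ≤ t →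
      b (t + 1) * Bent n a b k c d f g t ℓ = W t := by
    intro t hteq h1
    subst hteq
    rw [Bent_off (by omega), hW]
    simp only [went]
    rw [hgn, Finset.prod_Icc_succ_top (by omega : ℓ ≤ t + 1), hcn]
    have hQ : (∏ ν ∈ Finset.Icc ℓ t, c ν) ≠ 0 := hprod ℓ t (by omega)
    have hbn : b (t + 1) ≠ 0 := by
      rw [← hcn]
      exact hcne (t + 1) (by omega) (by omega)
    field_simp
    ring
  -- step lemma for the a-terms
  have stepU : ∀ t, ℓ + 1 ≤ t → t + 2 ≤ n →
      k (t + 1) * a (t + 1) * Bent n a b k c d f g t ℓ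
        = k (t + 1) * W t - k (t + 2) * W (t + 1) := by
    intro t h1 h2
    rw [Bent_off (by omega), hW]
    simp only [went]
    rw [Finset.prod_Icc_succ_top (by omega : ℓ ≤ t + 1),
      Finset.prod_Icc_succ_top (by omega : ℓ + 2 ≤ t + 1),
      hg (t + 1) (by omega) (by omega), hf (t + 1) (by omega) (by omega),
      hc (t + 1) (by omega) (by omega)]
    have hQ : (∏ ν ∈ Finset.Icc ℓ t, c ν) ≠ 0 := hprod ℓ t (by omega)
    have hct : (k (t + 1 + 1) * b (t + 1) - k (t + 1) * a (t + 1)) ≠ 0 := by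
      rw [← hc (t + 1) (by omega) (by omega)]
      exact hcne (t + 1) (by omega) (by omega)
    rw [show t + 2 = t + 1 + 1 from rfl]
    field_simp
    ring
  -- tail sums
  have tailV : ∀ m, ℓ + 1 ≤ m → m < n →
      (∑ t ∈ Finset.Ico m n, b (t + 1) * Bent n a b k c d f g t ℓ) = W m := by
    intro m hm1 hm2
    obtain ⟨s, rfl⟩ : ∃ s, n = s + 1 := ⟨n - 1, by omega⟩
    rw [Finset.sum_Ico_succ_top (by omega : m ≤ s), topV s rfl (by omega),
      Finset.sum_Ico_eq_sum_range]
    have hstep : ∀ t ∈ Finset.range (s - m),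
        b (m + t + 1) * Bent (s + 1) a b k c d f g (m + t) ℓ
          = (fun u => W (m + u)) t - (fun u => W (m + u)) (t + 1) := by
      intro t ht
      have h' := Finset.mem_range.mp ht
      exact stepV (m + t) (by omega) (by omega)
    rw [Finset.sum_congr rfl hstep, Finset.sum_range_sub' (fun u => W (m + u)) (s - m)]
    show W (m + 0) - W (m + (s - m)) + W s = W m
    rw [Nat.add_zero, show m + (s - m) = s by omega]
    ring
  -- base head sum
  have baseU : ℓ + 2 ≤ n →
      (∑ t ∈ Finset.Ico 0 (ℓ + 1), k (t + 1) * a (t + 1) * Bent n a b k c d f g t ℓ)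
        = -(k (ℓ + 2) * W (ℓ + 1)) := by
    intro hln
    have hWv := hWl1 hln
    by_cases h0 : ℓ = 0
    · rw [h0] at hWv ⊢
      rw [show (0 : ℕ) + 1 = 1 from rfl] at hWv ⊢
      rw [show (0 : ℕ) + 2 = 2 from rfl]
      rw [Nat.Ico_zero_eq_range, Finset.sum_range_one]
      rw [show (0 : ℕ) + 1 = 1 from rfl]
      rw [Bent_diag0, hWv, hd0, hc0]
      have hc1 : c 1 ≠ 0 := hcne 1 (by omega) (by omega)
      field_simp
    · obtain ⟨e, he⟩ : ∃ e, ℓ = e + 1 := ⟨ℓ - 1, by omega⟩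
      rw [he] at hWv ⊢
      rw [← Finset.sum_Ico_consecutive _ (Nat.zero_le e) (by omega : e ≤ e + 1 + 1)]
      have hz : (∑ t ∈ Finset.Ico 0 e,
          k (t + 1) * a (t + 1) * Bent n a b k c d f g t (e + 1)) = 0 :=
        Finset.sum_eq_zero fun t ht => by
          have h' := (Finset.mem_Ico.mp ht).2
          rw [Bent_zero (by omega)]
          ring
      rw [hz, Finset.sum_Ico_succ_top (by omega : e ≤ e + 1),
        Finset.sum_Ico_succ_top (by omega : e ≤ e), Finset.Ico_self, Finset.sum_empty,
        Bent_super, Bent_diagm (by omega) (by omega), hWv,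
        hd (e + 1) (by omega) (by omega), hc (e + 1 + 1) (by omega) (by omega)]
      have hne1 : c (e + 1) ≠ 0 := hcne _ (by omega) (by omega)
      have hne2 : (k (e + 1 + 1 + 1) * b (e + 1 + 1) - k (e + 1 + 1) * a (e + 1 + 1)) ≠ 0 := by
        rw [← hc (e + 1 + 1) (by omega) (by omega)]
        exact hcne _ (by omega) (by omega)
      rw [show e + 1 + 2 = e + 1 + 1 + 1 from rfl]
      field_simp
      ring
  -- head sums
  have headU : ∀ m, ℓ + 1 ≤ m → m < n →
      (∑ t ∈ Finset.Ico 0 m, k (t + 1) * a (t + 1) * Bent n a b k c d f g t ℓ)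
        = -(k (m + 1) * W m) := by
    intro m hm1 hm2
    rw [← Finset.sum_Ico_consecutive _ (Nat.zero_le (ℓ + 1)) hm1, baseU (by omega),
      Finset.sum_Ico_eq_sum_range]
    have hstep : ∀ t ∈ Finset.range (m - (ℓ + 1)),
        k (ℓ + 1 + t + 1) * a (ℓ + 1 + t + 1) * Bent n a b k c d f g (ℓ + 1 + t) ℓ
          = (fun u => k (ℓ + 1 + u + 1) * W (ℓ + 1 + u)) t
            - (fun u => k (ℓ + 1 + u + 1) * W (ℓ + 1 + u)) (t + 1) := by
      intro t ht
      have h' := Finset.mem_range.mp ht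
      exact stepU (ℓ + 1 + t) (by omega) (by omega)
    rw [Finset.sum_congr rfl hstep,
      Finset.sum_range_sub' (fun u => k (ℓ + 1 + u + 1) * W (ℓ + 1 + u)) (m - (ℓ + 1))]
    show -(k (ℓ + 2) * W (ℓ + 1)) +
        (k (ℓ + 1 + 0 + 1) * W (ℓ + 1 + 0)
          - k (ℓ + 1 + (m - (ℓ + 1)) + 1) * W (ℓ + 1 + (m - (ℓ + 1)))) = -(k (m + 1) * W m)
    rw [Nat.add_zero, show ℓ + 1 + (m - (ℓ + 1)) = m by omega,
      show ℓ + 1 + 1 = ℓ + 2 from rfl]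
    ring
  -- diagonal tail sum
  have diagV : (∑ t ∈ Finset.Ico ℓ n, b (t + 1) * Bent n a b k c d f g t ℓ)
      = if ℓ = 0 then 1 / k 1 else b ℓ / c ℓ := by
    by_cases hcase : ℓ + 1 = n
    · have hcn' : c (ℓ + 1) = b (ℓ + 1) := by rw [hcase]; exact hcn
      rw [← hcase, Finset.sum_Ico_succ_top (le_refl ℓ), Finset.Ico_self, Finset.sum_empty,
        Bent_diagn rfl (by omega), show ℓ + 1 - 1 = ℓ from rfl, hcn',
        if_neg (by omega : ¬ℓ = 0)]
      have hb : b (ℓ + 1) ≠ 0 := by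
        rw [← hcn']
        exact hcne (ℓ + 1) (by omega) (by omega)
      have hcl : c ℓ ≠ 0 := hcne ℓ (by omega) (by omega)
      field_simp
      ring
    · rw [Finset.sum_eq_sum_Ico_succ_bot hl, tailV (ℓ + 1) le_rfl (by omega), hWl1 (by omega)]
      by_cases h0 : ℓ = 0
      · rw [h0]
        rw [show (0 : ℕ) + 1 = 1 from rfl]
        rw [Bent_diag0, if_pos rfl, hd0, hc0, hc 1 (by omega) (by omega)]
        have hc1 : (k 2 * b 1 - k 1 * a 1) ≠ 0 := by
          rw [← hc 1 (by omega) (by omega)]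
          exact hcne 1 (by omega) (by omega)
        have hX : b 1 * k 2 - k 1 * a 1 ≠ 0 := fun h => hc1 (by linear_combination h)
        field_simp
        ring
      · rw [Bent_diagm (by omega) (by omega), if_neg h0,
          hd ℓ (by omega) (by omega), hc (ℓ + 1) (by omega) (by omega)]
        have hne1 : c ℓ ≠ 0 := hcne ℓ (by omega) (by omega)
        have hne2 : (k (ℓ + 1 + 1) * b (ℓ + 1) - k (ℓ + 1) * a (ℓ + 1)) ≠ 0 := by
          rw [← hc (ℓ + 1) (by omega) (by omega)]
          exact hcne _ (by omega) (by omega)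
        rw [show ℓ + 2 = ℓ + 1 + 1 from rfl]
        have hX : b (ℓ + 1) * k (ℓ + 1 + 1) - k (ℓ + 1) * a (ℓ + 1) ≠ 0 := fun h => hne2 (by linear_combination h)
        rw [← hc (ℓ + 1) (by omega) (by omega)]
        have hct' : c (ℓ + 1) ≠ 0 := hcne (ℓ + 1) (by omega) (by omega)
        field_simp
        rw [hc (ℓ + 1) (by omega) (by omega)]
        ring
  -- rewrite the goal as a sum over range n
  have hψ : ∀ j : Fin n, A₁ i j * B j l =
      (fun t => (if (i : ℕ) ≤ t then k ((i : ℕ) + 1) * b (t + 1) else k (t + 1) * a (t + 1)) *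
        Bent n a b k c d f g t ℓ) (j : ℕ) := by
    intro j
    rw [hA, hB]
    rfl
  rw [Finset.sum_congr rfl (fun j _ => hψ j),
    Fin.sum_univ_eq_sum_range (fun t => (if (i : ℕ) ≤ t then k ((i : ℕ) + 1) * b (t + 1)
      else k (t + 1) * a (t + 1)) * Bent n a b k c d f g t ℓ) n]
  rcases lt_trichotomy ((i : ℕ)) ℓ with hlt | heq | hgt
  · -- i < ℓ : entry is 0
    rw [if_neg (by intro h; rw [h] at hlt; omega)]
    obtain ⟨e, he⟩ : ∃ e, ℓ = e + 1 := ⟨ℓ - 1, by omega⟩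
    rw [Finset.range_eq_Ico,
      ← Finset.sum_Ico_consecutive _ (Nat.zero_le ((i : ℕ))) (le_of_lt i.isLt)]
    have hz1 : (∑ t ∈ Finset.Ico 0 ((i : ℕ)),
        (if (i : ℕ) ≤ t then k ((i : ℕ) + 1) * b (t + 1) else k (t + 1) * a (t + 1)) *
          Bent n a b k c d f g t ℓ) = 0 :=
      Finset.sum_eq_zero fun t ht => by
        have h' := (Finset.mem_Ico.mp ht).2
        rw [Bent_zero (by omega)]
        ring
    have h2 : ∀ t ∈ Finset.Ico ((i : ℕ)) n,
        (if (i : ℕ) ≤ t then k ((i : ℕ) + 1) * b (t + 1) else k (t + 1) * a (t + 1)) *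
          Bent n a b k c d f g t ℓ
          = k ((i : ℕ) + 1) * (b (t + 1) * Bent n a b k c d f g t ℓ) := by
      intro t ht
      rw [if_pos (Finset.mem_Ico.mp ht).1]
      ring
    rw [hz1, Finset.sum_congr rfl h2, ← Finset.mul_sum]
    rw [← Finset.sum_Ico_consecutive _ (by omega : (i : ℕ) ≤ e) (by omega : e ≤ n)]
    have hz2 : (∑ t ∈ Finset.Ico ((i : ℕ)) e, b (t + 1) * Bent n a b k c d f g t ℓ) = 0 :=
      Finset.sum_eq_zero fun t ht => by
        have h' := (Finset.mem_Ico.mp ht).2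
        rw [Bent_zero (by omega)]
        ring
    rw [hz2, Finset.sum_eq_sum_Ico_succ_bot (by omega : e < n)]
    rw [show e + 1 = ℓ from he.symm, diagV, if_neg (by omega), he, Bent_super]
    have hne1 : c (e + 1) ≠ 0 := hcne _ (by omega) (by omega)
    field_simp
    ring
  · -- i = ℓ : entry is 1
    have hil : i = l := Fin.ext heq
    rw [if_pos hil]
    rw [Finset.range_eq_Ico, ← Finset.sum_Ico_consecutive _ (Nat.zero_le ℓ) hl.le]
    have h1 : ∀ t ∈ Finset.Ico 0 ℓ,
        (if (i : ℕ) ≤ t then k ((i : ℕ) + 1) * b (t + 1) else k (t + 1) * a (t + 1)) *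
          Bent n a b k c d f g t ℓ
          = k (t + 1) * a (t + 1) * Bent n a b k c d f g t ℓ := by
      intro t ht
      have h' := (Finset.mem_Ico.mp ht).2
      rw [if_neg (by omega)]
    have h2 : ∀ t ∈ Finset.Ico ℓ n,
        (if (i : ℕ) ≤ t then k ((i : ℕ) + 1) * b (t + 1) else k (t + 1) * a (t + 1)) *
          Bent n a b k c d f g t ℓ
          = k (ℓ + 1) * (b (t + 1) * Bent n a b k c d f g t ℓ) := by
      intro t ht
      rw [heq, if_pos (Finset.mem_Ico.mp ht).1]
      ring
    rw [Finset.sum_congr rfl h1, Finset.sum_congr rfl h2, ← Finset.mul_sum, diagV]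
    by_cases h0 : ℓ = 0
    · rw [h0, Finset.Ico_self, Finset.sum_empty, if_pos rfl,
        show (0 : ℕ) + 1 = 1 from rfl]
      field_simp
      ring
    · obtain ⟨e, he⟩ : ∃ e, ℓ = e + 1 := ⟨ℓ - 1, by omega⟩
      rw [if_neg h0, he,
        ← Finset.sum_Ico_consecutive _ (Nat.zero_le e) (by omega : e ≤ e + 1)]
      have hz : (∑ t ∈ Finset.Ico 0 e,
          k (t + 1) * a (t + 1) * Bent n a b k c d f g t (e + 1)) = 0 :=
        Finset.sum_eq_zero fun t ht => by
          have h' := (Finset.mem_Ico.mp ht).2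
          rw [Bent_zero (by omega)]
          ring
      rw [hz, Finset.sum_Ico_succ_top (le_refl e), Finset.Ico_self, Finset.sum_empty,
        Bent_super, hc (e + 1) (by omega) (by omega)]
      have hne1 : (k (e + 1 + 1) * b (e + 1) - k (e + 1) * a (e + 1)) ≠ 0 := by
        rw [← hc (e + 1) (by omega) (by omega)]
        exact hcne _ (by omega) (by omega)
      field_simp
      ring
  · -- i > ℓ : entry is 0
    rw [if_neg (by intro h; rw [h] at hgt; omega)]
    rw [Finset.range_eq_Ico,
      ← Finset.sum_Ico_consecutive _ (Nat.zero_le ((i : ℕ))) (le_of_lt i.isLt)]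
    have h1 : ∀ t ∈ Finset.Ico 0 ((i : ℕ)),
        (if (i : ℕ) ≤ t then k ((i : ℕ) + 1) * b (t + 1) else k (t + 1) * a (t + 1)) *
          Bent n a b k c d f g t ℓ
          = k (t + 1) * a (t + 1) * Bent n a b k c d f g t ℓ := by
      intro t ht
      have h' := (Finset.mem_Ico.mp ht).2
      rw [if_neg (by omega)]
    have h2 : ∀ t ∈ Finset.Ico ((i : ℕ)) n,
        (if (i : ℕ) ≤ t then k ((i : ℕ) + 1) * b (t + 1) else k (t + 1) * a (t + 1)) *
          Bent n a b k c d f g t ℓ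
          = k ((i : ℕ) + 1) * (b (t + 1) * Bent n a b k c d f g t ℓ) := by
      intro t ht
      rw [if_pos (Finset.mem_Ico.mp ht).1]
      ring
    rw [Finset.sum_congr rfl h1, Finset.sum_congr rfl h2, ← Finset.mul_sum,
      headU ((i : ℕ)) (by omega) i.isLt, tailV ((i : ℕ)) (by omega) i.isLt]
    ring
end

section
/- Let B be the n×n matrix over F with entries: B_{ij} = 0 if j − i > 1; B_{i,i+1} = −1/c_i for 1 ≤ i ≤ n−1; B_{11} = k_2/(k_1 c_1); B_{nn} = b_{n−1}/(c_{n−1} c_n); B_{ii} = (k_{i+1} b_{i−1} − k_{i−1} a_{i−1})/(c_{i−1} c_i) for 2 ≤ i ≤ n−1; and B_{ij} = (−1)^{i+j} d_{j−1} g_i (∏_{ν=j+1}^{i−1} k_ν f_ν) / (∏_{ν=j−1}^{i} c_ν) for i − j ≥ 1, where the product over an empty index range equals 1. Assume k_1 ≠ 0 and c_i ≠ 0 for i = 1,…,n. Then B · A_1 = I, the n×n identity matrix. -/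
open Finset

section Helpers

lemma sum_Ico_bot {M : Type*} [AddCommMonoid M] (f : ℕ → M) {x y : ℕ} (h : x < y) :
    ∑ i ∈ Ico x y, f i = f x + ∑ i ∈ Ico (x + 1) y, f i := by
  rw [← Finset.sum_Ico_consecutive f (Nat.le_succ x) h]
  congr 1
  rw [Nat.succ_eq_add_one, Finset.Ico_add_one_right_eq_Icc, Finset.Icc_self, Finset.sum_singleton]

lemma prod_Icc_bot {M : Type*} [CommMonoid M] (f : ℕ → M) {x y : ℕ} (h : x ≤ y) :
    ∏ i ∈ Icc x y, f i = f x * ∏ i ∈ Icc (x + 1) y, f i := by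
  rw [Finset.Icc_add_one_left_eq_Ioc, ← Finset.Ioc_insert_left h, Finset.prod_insert (by simp)]

variable {F : Type*} [Field F]

/-- The inverse matrix entries, 0-based, matching `hB` verbatim. -/
def beeAux (n : ℕ) (a b k c d f g : ℕ → F) (i j : ℕ) : F :=
  if (j + 1) > (i + 1) + 1 then 0
  else if (j + 1) = (i + 1) + 1 then -1 / c (i + 1)
  else if i = j then
    (if i + 1 = 1 then k 2 / (k 1 * c 1)
     else if i + 1 = n then b (n - 1) / (c (n - 1) * c n)
     else (k (i + 2) * b i - k i * a i) / (c i * c (i + 1)))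
  else (-1 : F) ^ ((i + 1) + (j + 1)) * d j * g (i + 1) *
    (∏ ν ∈ Finset.Icc (j + 2) i, k ν * f ν) / ∏ ν ∈ Finset.Icc j (i + 1), c ν

variable {n : ℕ} {a b k c d f g : ℕ → F}

lemma beeAux_zero {i j : ℕ} (h : i + 1 < j) : beeAux n a b k c d f g i j = 0 := by
  simp only [beeAux]; rw [if_pos (by omega)]

lemma beeAux_sup {i j : ℕ} (h : j = i + 1) :
    beeAux n a b k c d f g i j = -1 / c (i + 1) := by
  simp only [beeAux]; rw [if_neg (by omega), if_pos (by omega)]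

lemma beeAux_diag0 : beeAux n a b k c d f g 0 0 = k 2 / (k 1 * c 1) := by
  simp only [beeAux]; norm_num

lemma beeAux_diag_mid {i : ℕ} (h1 : 1 ≤ i) (h2 : i + 1 < n) :
    beeAux n a b k c d f g i i = (k (i + 2) * b i - k i * a i) / (c i * c (i + 1)) := by
  simp only [beeAux]
  rw [if_neg (by omega), if_neg (by omega), if_pos trivial, if_neg (by omega), if_neg (by omega)]

lemma beeAux_diag_last {i : ℕ} (h1 : 1 ≤ i) (h2 : i + 1 = n) :
    beeAux n a b k c d f g i i = b (n - 1) / (c (n - 1) * c n) := by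
  simp only [beeAux]
  rw [if_neg (by omega), if_neg (by omega), if_pos trivial, if_neg (by omega), if_pos h2]

lemma beeAux_low {i j : ℕ} (h : j < i) :
    beeAux n a b k c d f g i j = (-1 : F) ^ (i + j) * d j * g (i + 1) *
      (∏ ν ∈ Finset.Icc (j + 2) i, k ν * f ν) / ∏ ν ∈ Finset.Icc j (i + 1), c ν := by
  simp only [beeAux]
  rw [if_neg (by omega), if_neg (by omega), if_neg (by omega)]
  congr 2
  rw [show (i + 1) + (j + 1) = (i + j) + 2 by ring, pow_add]
  norm_num

lemma prod_c_ne (hcne : ∀ i : ℕ, 1 ≤ i → i ≤ n → c i ≠ 0) {x y : ℕ}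
    (hx : 1 ≤ x) (hy : y ≤ n) : (∏ ν ∈ Icc x y, c ν) ≠ 0 :=
  Finset.prod_ne_zero_iff.mpr fun ν hν =>
    hcne ν (le_trans hx (Finset.mem_Icc.mp hν).1) (le_trans (Finset.mem_Icc.mp hν).2 hy)

end Helpers

section Main
variable {F : Type*} [Field F] {n : ℕ} {a b k c d f g : ℕ → F}

lemma lemU (hn : 3 ≤ n)
    (hc0 : c 0 = 1)
    (hc : ∀ i : ℕ, 1 ≤ i → i ≤ n - 1 → c i = k (i + 1) * b i - k i * a i)
    (hd0 : d 0 = a 1)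
    (hd : ∀ i : ℕ, 1 ≤ i → i ≤ n - 2 →
      d i = k (i + 1) * a (i + 1) * b i - k i * a i * b (i + 1))
    (hf : ∀ i : ℕ, 2 ≤ i → i ≤ n - 1 → f i = a i - b i)
    (hcne : ∀ i : ℕ, 1 ≤ i → i ≤ n → c i ≠ 0)
    {p : ℕ} (hp2 : p ≤ n - 1) :
    ∀ m0 : ℕ, m0 < p →
      ∑ q ∈ range (m0 + 1), k (q + 1) * beeAux n a b k c d f g p q
        = (-1 : F) ^ (p + m0) * g (p + 1) * (k (m0 + 1) * a (m0 + 1)) *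
          (∏ ν ∈ Icc (m0 + 2) p, k ν * f ν) / ∏ ν ∈ Icc (m0 + 1) (p + 1), c ν := by
  intro m0
  induction m0 with
  | zero =>
    intro h0
    rw [Finset.sum_range_one, beeAux_low (by omega)]
    rw [prod_Icc_bot c (by omega : (0:ℕ) ≤ p + 1), hc0, hd0]
    norm_num
    ring
  | succ m0 ih =>
    intro h0
    rw [Finset.sum_range_succ, ih (by omega), beeAux_low (by omega)]
    rw [show m0 + 1 + 2 = m0 + 3 by omega, show m0 + 1 + 1 = m0 + 2 by omega]
    rw [prod_Icc_bot (fun ν => k ν * f ν) (by omega : m0 + 2 ≤ p)]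
    rw [prod_Icc_bot c (by omega : m0 + 1 ≤ p + 1)]
    rw [show m0 + 2 + 1 = m0 + 3 by omega, show m0 + 1 + 1 = m0 + 2 by omega]
    rw [show p + (m0 + 1) = (p + m0) + 1 by omega, pow_succ]
    rw [hd (m0 + 1) (by omega) (by omega), hf (m0 + 2) (by omega) (by omega),
      hc (m0 + 1) (by omega) (by omega)]
    have h1 : k (m0 + 1 + 1) * b (m0 + 1) - k (m0 + 1) * a (m0 + 1) ≠ 0 := by
      rw [← hc (m0 + 1) (by omega) (by omega)]
      exact hcne (m0 + 1) (by omega) (by omega)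
    have h2 : (∏ ν ∈ Icc (m0 + 2) (p + 1), c ν) ≠ 0 :=
      prod_c_ne hcne (by omega) (by omega)
    rw [show m0 + 1 + 1 = m0 + 2 by omega] at h1
    field_simp
    ring

lemma lemV (hn : 3 ≤ n)
    (hc : ∀ i : ℕ, 1 ≤ i → i ≤ n - 1 → c i = k (i + 1) * b i - k i * a i)
    (hd : ∀ i : ℕ, 1 ≤ i → i ≤ n - 2 →
      d i = k (i + 1) * a (i + 1) * b i - k i * a i * b (i + 1))
    (hf : ∀ i : ℕ, 2 ≤ i → i ≤ n - 1 → f i = a i - b i)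
    (hg : ∀ i : ℕ, 2 ≤ i → i ≤ n - 1 → g i = k (i + 1) - k i)
    (hgn : g n = 1)
    (hcne : ∀ i : ℕ, 1 ≤ i → i ≤ n → c i ≠ 0)
    {p : ℕ} (hp1 : 1 ≤ p) (hp2 : p ≤ n - 1) :
    ∀ t m : ℕ, m + t = p → 1 ≤ m →
      ∑ q ∈ Ico m (min (p + 1) (n - 1) + 1), beeAux n a b k c d f g p q
        = (-1 : F) ^ (p + m) * g (p + 1) * b m *
          (∏ ν ∈ Icc (m + 1) p, k ν * f ν) / ∏ ν ∈ Icc m (p + 1), c ν := by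
  intro t
  induction t with
  | zero =>
    intro m hm hm1
    have hmp : m = p := by omega
    subst hmp
    rw [show (-1 : F) ^ (m + m) = 1 by
      rw [show m + m = 2 * m by omega, pow_mul]; norm_num]
    rw [Finset.Icc_eq_empty (by omega : ¬ m + 1 ≤ m), Finset.prod_empty]
    rw [prod_Icc_bot c (by omega : m ≤ m + 1), Finset.Icc_self, Finset.prod_singleton]
    by_cases hlast : m + 1 = n
    · rw [show min (m + 1) (n - 1) + 1 = m + 1 by omega]
      rw [sum_Ico_bot _ (by omega), Finset.Ico_self, Finset.sum_empty,
        beeAux_diag_last (by omega) hlast]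
      rw [show n - 1 = m by omega, ← hlast,
        show g (m + 1) = 1 from by rw [hlast]; exact hgn]
      ring
    · rw [show min (m + 1) (n - 1) + 1 = m + 2 by omega]
      rw [sum_Ico_bot _ (by omega), sum_Ico_bot _ (by omega), Finset.Ico_self,
        Finset.sum_empty, beeAux_diag_mid (by omega) (by omega),
        beeAux_sup rfl]
      rw [hg (m + 1) (by omega) (by omega)]
      have h1 : k (m + 1) * b m - k m * a m ≠ 0 := by
        rw [← hc m (by omega) (by omega)]; exact hcne m (by omega) (by omega)
      have h2 : c (m + 1) ≠ 0 := hcne (m + 1) (by omega) (by omega)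
      rw [hc m (by omega) (by omega)]
      field_simp
      linear_combination mul_inv_cancel₀ h1
  | succ t ih =>
    intro m hm hm1
    rw [sum_Ico_bot _ (by omega), ih (m + 1) (by omega) (by omega),
      beeAux_low (by omega : m < p)]
    rw [prod_Icc_bot (fun ν => k ν * f ν) (by omega : m + 1 ≤ p)]
    rw [prod_Icc_bot c (by omega : m ≤ p + 1)]
    rw [show m + 1 + 1 = m + 2 by omega]
    rw [show p + (m + 1) = (p + m) + 1 by omega, pow_succ]
    rw [hd m (by omega) (by omega), hf (m + 1) (by omega) (by omega)]
    have h1 : k (m + 1) * b m - k m * a m ≠ 0 := by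
      rw [← hc m (by omega) (by omega)]; exact hcne m (by omega) (by omega)
    have h2 : (∏ ν ∈ Icc (m + 1) (p + 1), c ν) ≠ 0 :=
      prod_c_ne hcne (by omega) (by omega)
    rw [hc m (by omega) (by omega)]
    field_simp
    ring

lemma entry (hn : 3 ≤ n)
    (hc0 : c 0 = 1)
    (hc : ∀ i : ℕ, 1 ≤ i → i ≤ n - 1 → c i = k (i + 1) * b i - k i * a i)
    (hcn : c n = b n)
    (hd0 : d 0 = a 1)
    (hd : ∀ i : ℕ, 1 ≤ i → i ≤ n - 2 →
      d i = k (i + 1) * a (i + 1) * b i - k i * a i * b (i + 1))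
    (hf : ∀ i : ℕ, 2 ≤ i → i ≤ n - 1 → f i = a i - b i)
    (hg : ∀ i : ℕ, 2 ≤ i → i ≤ n - 1 → g i = k (i + 1) - k i)
    (hgn : g n = 1)
    (hk1 : k 1 ≠ 0)
    (hcne : ∀ i : ℕ, 1 ≤ i → i ≤ n → c i ≠ 0)
    {I J : ℕ} (hI : I < n) (hJ : J < n) :
    ∑ q ∈ range n, beeAux n a b k c d f g I q *
      (if q ≤ J then k (q + 1) * b (J + 1) else k (J + 1) * a (J + 1))
      = if I = J then 1 else 0 := by
  have htr : ∑ q ∈ range n, beeAux n a b k c d f g I q *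
      (if q ≤ J then k (q + 1) * b (J + 1) else k (J + 1) * a (J + 1))
      = ∑ q ∈ range (min (I + 1) (n - 1) + 1), beeAux n a b k c d f g I q *
      (if q ≤ J then k (q + 1) * b (J + 1) else k (J + 1) * a (J + 1)) := by
    symm
    apply Finset.sum_subset
    · intro q hq; simp only [Finset.mem_range] at *; omega
    · intro q hq hq'
      simp only [Finset.mem_range] at hq hq'
      rw [beeAux_zero (by omega), zero_mul]
  rw [htr]
  rcases Nat.eq_zero_or_pos I with hI0 | hI1
  · -- first row
    subst hI0
    rw [show min (0 + 1) (n - 1) + 1 = 2 by omega]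
    rw [Finset.sum_range_succ, Finset.sum_range_one, beeAux_diag0,
      beeAux_sup rfl, if_pos (by omega : 0 ≤ J)]
    have h1 : c 1 ≠ 0 := hcne 1 (by omega) (by omega)
    rcases Nat.eq_zero_or_pos J with hJ0 | hJ1
    · subst hJ0
      rw [if_neg (by omega), if_pos rfl, hc 1 (by omega) (by omega)]
      rw [hc 1 (by omega) (by omega)] at h1
      field_simp
      ring
    · rw [if_pos (by omega : 1 ≤ J), if_neg (by omega)]
      field_simp
      ring
  · -- rows 2..n : I ≥ 1
    obtain ⟨p0, rfl⟩ : ∃ p0, I = p0 + 1 := ⟨I - 1, by omega⟩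
    rcases lt_or_ge J (p0 + 1) with hJlt | hJge
    · -- J < I : entry 0
      rw [if_neg (by omega)]
      have hsplit : range (min (p0 + 1 + 1) (n - 1) + 1) =
          Ico 0 (J + 1) ∪ Ico (J + 1) (min (p0 + 1 + 1) (n - 1) + 1) := by
        rw [Finset.range_eq_Ico, Finset.Ico_union_Ico_eq_Ico (by omega) (by omega)]
      rw [hsplit, Finset.sum_union (by
        apply Finset.Ico_disjoint_Ico_consecutive)]
      have e1 : ∑ q ∈ Ico 0 (J + 1), beeAux n a b k c d f g (p0 + 1) q *
          (if q ≤ J then k (q + 1) * b (J + 1) else k (J + 1) * a (J + 1))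
          = b (J + 1) * ∑ q ∈ range (J + 1), k (q + 1) * beeAux n a b k c d f g (p0 + 1) q := by
        rw [Finset.mul_sum, ← Finset.range_eq_Ico]
        refine Finset.sum_congr rfl fun q hq => ?_
        simp only [Finset.mem_range] at hq
        rw [if_pos (by omega)]
        ring
      have e2 : ∑ q ∈ Ico (J + 1) (min (p0 + 1 + 1) (n - 1) + 1),
          beeAux n a b k c d f g (p0 + 1) q *
          (if q ≤ J then k (q + 1) * b (J + 1) else k (J + 1) * a (J + 1))
          = (k (J + 1) * a (J + 1)) * ∑ q ∈ Ico (J + 1) (min (p0 + 1 + 1) (n - 1) + 1),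
            beeAux n a b k c d f g (p0 + 1) q := by
        rw [Finset.mul_sum]
        refine Finset.sum_congr rfl fun q hq => ?_
        simp only [Finset.mem_Ico] at hq
        rw [if_neg (by omega)]
        ring
      rw [e1, e2,
        lemU hn hc0 hc hd0 hd hf hcne (by omega) J (by omega),
        lemV hn hc hd hf hg hgn hcne (by omega) (by omega)
          (p0 - J) (J + 1) (by omega) (by omega)]
      rw [show p0 + 1 + (J + 1) = (p0 + 1 + J) + 1 by omega, pow_succ]
      ring
    · have hsgn : (-1 : F) ^ (p0 + 1 + p0) = -1 := by
        rw [show p0 + 1 + p0 = 2 * p0 + 1 by omega, pow_succ, pow_mul]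
        norm_num
      have hc1 : c (p0 + 1) ≠ 0 := hcne (p0 + 1) (by omega) (by omega)
      rcases eq_or_lt_of_le hJge with hJeq | hJgt
      · -- J = I : entry 1
        subst hJeq
        rw [if_pos rfl]
        rw [show p0 + 1 + 1 = p0 + 2 by omega]
        rcases (show p0 + 2 ≤ n - 1 ∨ p0 + 2 = n by omega) with hmid | hlast
        · -- middle diagonal rows
          rw [show min (p0 + 2) (n - 1) + 1 = p0 + 3 by omega]
          rw [Finset.sum_range_succ, if_neg (by omega), beeAux_sup rfl]
          have e1 : ∑ q ∈ range (p0 + 2), beeAux n a b k c d f g (p0 + 1) q *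
              (if q ≤ p0 + 1 then k (q + 1) * b (p0 + 2) else k (p0 + 2) * a (p0 + 2))
              = b (p0 + 2) * ∑ q ∈ range (p0 + 2), k (q + 1) * beeAux n a b k c d f g (p0 + 1) q := by
            rw [Finset.mul_sum]
            refine Finset.sum_congr rfl fun q hq => ?_
            simp only [Finset.mem_range] at hq
            rw [if_pos (by omega)]
            ring
          rw [e1, Finset.sum_range_succ,
            lemU hn hc0 hc hd0 hd hf hcne (by omega) p0 (by omega),
            beeAux_diag_mid (by omega) (by omega),
            Finset.Icc_eq_empty (by omega : ¬ p0 + 2 ≤ p0 + 1), Finset.prod_empty,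
            prod_Icc_bot c (by omega : p0 + 1 ≤ p0 + 1 + 1), Finset.Icc_self,
            Finset.prod_singleton, hsgn,
            hg (p0 + 2) (by omega) (by omega), hc (p0 + 2) (by omega) (by omega),
            hc (p0 + 1) (by omega) (by omega)]
          rw [hc (p0 + 1) (by omega) (by omega)] at hc1
          have hc2 : c (p0 + 2) ≠ 0 := hcne (p0 + 2) (by omega) (by omega)
          rw [hc (p0 + 2) (by omega) (by omega)] at hc2
          rw [show p0 + 1 + 1 = p0 + 2 by omega, show p0 + 2 + 1 = p0 + 3 by omega] at *
          field_simp
          linear_combination (k (p0 + 2) * b (p0 + 1) - k (p0 + 1) * a (p0 + 1)) * mul_inv_cancel₀ hc2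
        · -- last row diagonal
          rw [show min (p0 + 2) (n - 1) + 1 = p0 + 2 by omega]
          have e1 : ∑ q ∈ range (p0 + 2), beeAux n a b k c d f g (p0 + 1) q *
              (if q ≤ p0 + 1 then k (q + 1) * b (p0 + 2) else k (p0 + 2) * a (p0 + 2))
              = b (p0 + 2) * ∑ q ∈ range (p0 + 2), k (q + 1) * beeAux n a b k c d f g (p0 + 1) q := by
            rw [Finset.mul_sum]
            refine Finset.sum_congr rfl fun q hq => ?_
            simp only [Finset.mem_range] at hq
            rw [if_pos (by omega)]
            ring
          have hgn' : g (p0 + 2) = 1 := by rw [hlast]; exact hgn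
          have hcn' : c (p0 + 2) = b (p0 + 2) := by rw [hlast]; exact hcn
          have hc2 : c (p0 + 2) ≠ 0 := hcne (p0 + 2) (by omega) (by omega)
          have hb : b (p0 + 2) ≠ 0 := hcn' ▸ hc2
          rw [e1, Finset.sum_range_succ,
            lemU hn hc0 hc hd0 hd hf hcne (by omega) p0 (by omega),
            beeAux_diag_last (by omega) (by omega : p0 + 1 + 1 = n),
            show n - 1 = p0 + 1 by omega, show n = p0 + 2 by omega,
            Finset.Icc_eq_empty (by omega : ¬ p0 + 2 ≤ p0 + 1), Finset.prod_empty,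
            prod_Icc_bot c (by omega : p0 + 1 ≤ p0 + 1 + 1), Finset.Icc_self,
            Finset.prod_singleton, hsgn, hgn',
            hc (p0 + 1) (by omega) (by omega), hcn']
          rw [hc (p0 + 1) (by omega) (by omega)] at hc1
          rw [show p0 + 1 + 1 = p0 + 2 by omega] at *
          field_simp
          ring
      · -- J > I : entry 0
        rw [if_neg (by omega)]
        rw [show min (p0 + 1 + 1) (n - 1) + 1 = p0 + 3 by omega]
        have e1 : ∑ q ∈ range (p0 + 3), beeAux n a b k c d f g (p0 + 1) q *
            (if q ≤ J then k (q + 1) * b (J + 1) else k (J + 1) * a (J + 1))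
            = b (J + 1) * ∑ q ∈ range (p0 + 3), k (q + 1) * beeAux n a b k c d f g (p0 + 1) q := by
          rw [Finset.mul_sum]
          refine Finset.sum_congr rfl fun q hq => ?_
          simp only [Finset.mem_range] at hq
          rw [if_pos (by omega)]
          ring
        rw [e1]
        have e2 : ∑ q ∈ range (p0 + 3), k (q + 1) * beeAux n a b k c d f g (p0 + 1) q = 0 := by
          rw [Finset.sum_range_succ, Finset.sum_range_succ,
            lemU hn hc0 hc hd0 hd hf hcne (by omega) p0 (by omega),
            beeAux_diag_mid (by omega) (by omega), beeAux_sup rfl,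
            Finset.Icc_eq_empty (by omega : ¬ p0 + 2 ≤ p0 + 1), Finset.prod_empty,
            prod_Icc_bot c (by omega : p0 + 1 ≤ p0 + 1 + 1), Finset.Icc_self,
            Finset.prod_singleton, hsgn,
            hg (p0 + 2) (by omega) (by omega), hc (p0 + 1) (by omega) (by omega)]
          rw [hc (p0 + 1) (by omega) (by omega)] at hc1
          have hc2 : c (p0 + 1 + 1) ≠ 0 := hcne (p0 + 2) (by omega) (by omega)
          field_simp
          ring
        rw [e2, mul_zero]

end Main

/-- With `A₁` the Brownian-type matrix `(A₁)_{ij} = kᵢbⱼ (i ≤ j)`,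
`kⱼaⱼ (i > j)` (1-based), and `B` the lower Hessenberg matrix of formulae (3),
assuming `k₁ ≠ 0` and `cᵢ ≠ 0` for `i = 1,…,n`, we have `B * A₁ = 1`. -/
theorem stmt_1 {F : Type*} [Field F] {n : ℕ} (hn : 3 ≤ n)
    (a b k c d f g : ℕ → F)
    (A₁ B : Matrix (Fin n) (Fin n) F)
    (hA : ∀ i j : Fin n, A₁ i j =
      if (i : ℕ) ≤ (j : ℕ) then k ((i : ℕ) + 1) * b ((j : ℕ) + 1)
      else k ((j : ℕ) + 1) * a ((j : ℕ) + 1))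
    (hc0 : c 0 = 1)
    (hc : ∀ i : ℕ, 1 ≤ i → i ≤ n - 1 → c i = k (i + 1) * b i - k i * a i)
    (hcn : c n = b n)
    (hd0 : d 0 = a 1)
    (hd : ∀ i : ℕ, 1 ≤ i → i ≤ n - 2 →
      d i = k (i + 1) * a (i + 1) * b i - k i * a i * b (i + 1))
    (hf : ∀ i : ℕ, 2 ≤ i → i ≤ n - 1 → f i = a i - b i)
    (hg : ∀ i : ℕ, 2 ≤ i → i ≤ n - 1 → g i = k (i + 1) - k i)
    (hgn : g n = 1)
    (hB : ∀ i j : Fin n, B i j =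
      if ((j : ℕ) + 1) > ((i : ℕ) + 1) + 1 then 0
      else if ((j : ℕ) + 1) = ((i : ℕ) + 1) + 1 then -1 / c ((i : ℕ) + 1)
      else if (i : ℕ) = (j : ℕ) then
        (if (i : ℕ) + 1 = 1 then k 2 / (k 1 * c 1)
         else if (i : ℕ) + 1 = n then b (n - 1) / (c (n - 1) * c n)
         else (k ((i : ℕ) + 2) * b (i : ℕ) - k (i : ℕ) * a (i : ℕ)) /
           (c (i : ℕ) * c ((i : ℕ) + 1)))
      else (-1 : F) ^ (((i : ℕ) + 1) + ((j : ℕ) + 1)) * d (j : ℕ) * g ((i : ℕ) + 1) *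
        (∏ ν ∈ Finset.Icc ((j : ℕ) + 2) (i : ℕ), k ν * f ν) /
        ∏ ν ∈ Finset.Icc (j : ℕ) ((i : ℕ) + 1), c ν)
    (hk1 : k 1 ≠ 0)
    (hcne : ∀ i : ℕ, 1 ≤ i → i ≤ n → c i ≠ 0) :
    B * A₁ = 1 := by
  ext i j
  rw [Matrix.mul_apply, Matrix.one_apply]
  have h1 : ∀ l : Fin n, B i l * A₁ l j =
      beeAux n a b k c d f g (i : ℕ) (l : ℕ) *
      (if (l : ℕ) ≤ (j : ℕ) then k ((l : ℕ) + 1) * b ((j : ℕ) + 1)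
       else k ((j : ℕ) + 1) * a ((j : ℕ) + 1)) := by
    intro l
    rw [hB i l, hA l j]
    rfl
  calc ∑ l : Fin n, B i l * A₁ l j
      = ∑ q ∈ Finset.range n, beeAux n a b k c d f g (i : ℕ) q *
        (if q ≤ (j : ℕ) then k (q + 1) * b ((j : ℕ) + 1)
         else k ((j : ℕ) + 1) * a ((j : ℕ) + 1)) := by
        rw [← Fin.sum_univ_eq_sum_range]
        exact Finset.sum_congr rfl fun l _ => h1 l
    _ = if (i : ℕ) = (j : ℕ) then 1 else 0 :=
        entry hn hc0 hc hcn hd0 hd hf hg hgn hk1 hcne i.isLt j.isLt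
    _ = if i = j then 1 else 0 := by simp [Fin.ext_iff]
end

section
/- The matrix A_1 is invertible if and only if k_1 ≠ 0, b_n ≠ 0, and k_{i+1} b_i − k_i a_i ≠ 0 for every i with 1 ≤ i ≤ n−1. -/
open Matrix Finset

section aux
variable {R : Type*} [CommRing R]

private def Ag (n : ℕ) (a b k : ℕ → R) : Matrix (Fin n) (Fin n) R :=
  fun i j => if (i : ℕ) ≤ (j : ℕ) then k ((i:ℕ)+1) * b ((j:ℕ)+1) else k ((j:ℕ)+1) * a ((j:ℕ)+1)

private def Mg (n : ℕ) (k : ℕ → R) : Matrix (Fin n) (Fin n) R :=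
  fun i j =>
    if j = i then (if (i:ℕ) = n - 1 then 1 else k ((i:ℕ)+2))
    else if (j:ℕ) = (i:ℕ)+1 then -(k ((i:ℕ)+1)) else 0

private lemma Mg_det (n : ℕ) (k : ℕ → R) :
    (Mg n k).det = ∏ i : Fin n, (if (i:ℕ) = n - 1 then 1 else k ((i:ℕ)+2)) := by
  rw [Matrix.det_of_upperTriangular]
  · exact Finset.prod_congr rfl fun i _ => by simp [Mg]
  · intro i j hij
    have h : (j:ℕ) < (i:ℕ) := hij
    simp only [Mg]
    rw [if_neg (fun he => by subst he; exact lt_irrefl _ h), if_neg (by omega)]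

private lemma mul_last (n : ℕ) (a b k : ℕ → R) (i j : Fin n) (hi : (i:ℕ) = n - 1) :
    (Mg n k * Ag n a b k) i j = Ag n a b k i j := by
  rw [Matrix.mul_apply]
  rw [Finset.sum_eq_single i]
  · simp [Mg, hi]
  · intro l _ hl
    have h1 : ¬ ((i:ℕ) = (i:ℕ) + 1) := by omega
    have h2 : (l:ℕ) ≠ (i:ℕ) + 1 := by
      have := l.isLt; omega
    simp [Mg, Ne.symm hl, h2, Fin.ext_iff]
    intro h; omega
  · simp

private lemma mul_lt (n : ℕ) (a b k : ℕ → R) (i j : Fin n) (hi : (i:ℕ) < n - 1) :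
    (Mg n k * Ag n a b k) i j =
      k ((i:ℕ)+2) * Ag n a b k i j - k ((i:ℕ)+1) * Ag n a b k ⟨(i:ℕ)+1, by omega⟩ j := by
  rw [Matrix.mul_apply]
  set i' : Fin n := ⟨(i:ℕ)+1, by omega⟩ with hi'
  have hne : i ≠ i' := by simp [Fin.ext_iff, hi']
  have step : ∀ l : Fin n, Mg n k i l * Ag n a b k l j =
      (if l = i then k ((i:ℕ)+2) * Ag n a b k i j else 0) +
      (if l = i' then -(k ((i:ℕ)+1)) * Ag n a b k i' j else 0) := by
    intro l
    by_cases h1 : l = i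
    · subst h1
      rw [if_pos rfl, if_neg hne]
      simp [Mg, Fin.ext_iff]
      omega
    · by_cases h2 : l = i'
      · subst h2
        rw [if_neg h1, if_pos rfl]
        have hM : Mg n k i i' = -(k ((i:ℕ)+1)) := by
          simp only [Mg]
          rw [if_neg (fun he => hne he.symm)]
          simp [hi']
        rw [hM, zero_add]
      · rw [if_neg h1, if_neg h2]
        have : (l:ℕ) ≠ (i:ℕ)+1 := fun h => h2 (Fin.ext h)
        simp [Mg, h1, this]
  rw [Finset.sum_congr rfl fun l _ => step l, Finset.sum_add_distrib,
    Finset.sum_ite_eq' univ i, Finset.sum_ite_eq' univ i']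
  simp
  ring
end aux

section aux2
variable {R : Type*} [CommRing R]

private lemma key (n : ℕ) (hn : 2 ≤ n) (a b k : ℕ → R) :
    (∏ i ∈ Finset.range (n-1), k (i+2)) * (Ag n a b k).det =
      (∏ i ∈ Finset.range (n-1),
        (k (i+1) * (k (i+2) * b (i+1) - k (i+1) * a (i+1)))) * (k n * b n) := by
  have hMA : (Mg n k * Ag n a b k).det =
      ∏ i : Fin n, (if (i:ℕ) = n - 1 then k n * b n
        else k ((i:ℕ)+1) * (k ((i:ℕ)+2) * b ((i:ℕ)+1) - k ((i:ℕ)+1) * a ((i:ℕ)+1))) := by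
    rw [Matrix.det_of_lowerTriangular]
    · refine Finset.prod_congr rfl fun i _ => ?_
      by_cases hi : (i:ℕ) = n - 1
      · rw [if_pos hi, mul_last n a b k i i hi]
        have hn1 : n - 1 + 1 = n := by omega
        simp only [Ag, hi, hn1]
        rw [if_pos (le_refl (n-1))]
      · have hi' : (i:ℕ) < n - 1 := by have := i.isLt; omega
        rw [if_neg hi, mul_lt n a b k i i hi']
        have h1 : (i:ℕ) ≤ (i:ℕ) := le_refl _
        have h2 : ¬ ((i:ℕ)+1 ≤ (i:ℕ)) := by omega
        simp only [Ag, if_pos h1]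
        rw [if_neg h2]
        ring
    · intro i j hij
      have hlt : (i:ℕ) < (j:ℕ) := hij
      have hi' : (i:ℕ) < n - 1 := by have := j.isLt; omega
      rw [mul_lt n a b k i j hi']
      have h1 : (i:ℕ) ≤ (j:ℕ) := le_of_lt hlt
      have h2 : (i:ℕ)+1 ≤ (j:ℕ) := hlt
      simp only [Ag, if_pos h1]
      rw [if_pos h2]
      ring
  have hdet := Matrix.det_mul (Mg n k) (Ag n a b k)
  rw [hMA, Mg_det] at hdet
  rw [Fin.prod_univ_eq_prod_range (fun i => if i = n - 1 then (1:R) else k (i+2)) n,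
    Fin.prod_univ_eq_prod_range (fun i => if i = n - 1 then k n * b n
      else k (i+1) * (k (i+2) * b (i+1) - k (i+1) * a (i+1))) n] at hdet
  have hsplit : n = (n-1) + 1 := by omega
  have hpr : ∀ f : ℕ → R, ∏ i ∈ Finset.range n, f i
      = (∏ i ∈ Finset.range (n-1), f i) * f (n-1) := by
    intro f
    conv_lhs => rw [hsplit]
    exact Finset.prod_range_succ f (n-1)
  rw [hpr, hpr] at hdet
  rw [if_pos rfl, if_pos rfl] at hdet
  have e1 : ∀ f : ℕ → R, ∏ i ∈ Finset.range (n-1), (if i = n-1 then (1:R) else f i)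
      = ∏ i ∈ Finset.range (n-1), f i := fun f =>
    Finset.prod_congr rfl fun i hi => if_neg (by have := Finset.mem_range.mp hi; omega)
  have e2 : ∀ c : R, ∏ i ∈ Finset.range (n-1), (if i = n-1 then c
        else k (i+1) * (k (i+2) * b (i+1) - k (i+1) * a (i+1)))
      = ∏ i ∈ Finset.range (n-1), (k (i+1) * (k (i+2) * b (i+1) - k (i+1) * a (i+1))) :=
    fun c => Finset.prod_congr rfl fun i hi =>
      if_neg (by have := Finset.mem_range.mp hi; omega)
  rw [e1, e2, mul_one] at hdet
  rw [← hdet]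
end aux2

private lemma detA {F : Type*} [Field F] (n : ℕ) (hn : 2 ≤ n) (a b k : ℕ → F) :
    (Ag n a b k).det = k 1 * b n *
      ∏ i ∈ Finset.range (n-1), (k (i+2) * b (i+1) - k (i+1) * a (i+1)) := by
  classical
  set R := MvPolynomial ℕ F
  set a' : ℕ → R := fun i => MvPolynomial.C (a i)
  set b' : ℕ → R := fun i => MvPolynomial.C (b i)
  set k' : ℕ → R := fun i => MvPolynomial.X i
  have hkey := key n hn a' b' k'
  -- rearrange
  have hP : ∀ i : ℕ, (k' i : R) ≠ 0 := fun i => MvPolynomial.X_ne_zero i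
  have hc1 : ∏ i ∈ Finset.range (n-1), k' (i+2)
      = (∏ i ∈ Finset.range (n-2), k' (i+2)) * k' n := by
    have : n - 1 = (n-2) + 1 := by omega
    rw [this, Finset.prod_range_succ]
    congr 2
    omega
  have hc2 : ∏ i ∈ Finset.range (n-1), k' (i+1)
      = (∏ i ∈ Finset.range (n-2), k' (i+2)) * k' 1 := by
    have : n - 1 = (n-2) + 1 := by omega
    rw [this, Finset.prod_range_succ' (fun i => k' (i+1))]
  rw [Finset.prod_mul_distrib, hc1, hc2] at hkey
  have hPd : ((∏ i ∈ Finset.range (n-2), k' (i+2)) * k' n : R) ≠ 0 :=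
    mul_ne_zero (Finset.prod_ne_zero_iff.mpr fun i _ => hP _) (hP n)
  have hpoly : (Ag n a' b' k').det = k' 1 * b' n *
      ∏ i ∈ Finset.range (n-1), (k' (i+2) * b' (i+1) - k' (i+1) * a' (i+1)) := by
    apply mul_left_cancel₀ hPd
    rw [hkey]
    ring
  -- evaluate
  have hmap : (MvPolynomial.eval k).mapMatrix (Ag n a' b' k') = Ag n a b k := by
    ext i j
    simp only [RingHom.mapMatrix_apply, Matrix.map_apply, Ag, apply_ite (MvPolynomial.eval k)]
    simp [a', b', k']
  have := (MvPolynomial.eval k).map_det (Ag n a' b' k')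
  rw [hmap, hpoly] at this
  rw [← this]
  simp [a', b', k']

/-- `A₁` is invertible iff `k₁ ≠ 0`, `bₙ ≠ 0`, and
`k_{i+1} bᵢ - kᵢ aᵢ ≠ 0` for `1 ≤ i ≤ n-1`. -/
theorem stmt_3 {F : Type*} [Field F] {n : ℕ} (hn : 2 ≤ n)
    (a b k : ℕ → F)
    (A₁ : Matrix (Fin n) (Fin n) F)
    (hA : ∀ i j : Fin n, A₁ i j =
      if (i : ℕ) ≤ (j : ℕ) then k ((i : ℕ) + 1) * b ((j : ℕ) + 1)
      else k ((j : ℕ) + 1) * a ((j : ℕ) + 1)) :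
    IsUnit A₁ ↔
      (k 1 ≠ 0 ∧ b n ≠ 0 ∧ ∀ i : ℕ, 1 ≤ i → i ≤ n - 1 → k (i + 1) * b i - k i * a i ≠ 0) := by
  have hAeq : A₁ = Ag n a b k := by
    ext i j
    rw [hA i j]
    rfl
  rw [Matrix.isUnit_iff_isUnit_det, isUnit_iff_ne_zero, hAeq, detA n hn a b k]
  rw [mul_ne_zero_iff, mul_ne_zero_iff, Finset.prod_ne_zero_iff]
  constructor
  · rintro ⟨⟨h1, h2⟩, h3⟩
    refine ⟨h1, h2, fun i hi1 hi2 => ?_⟩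
    obtain ⟨j, rfl⟩ : ∃ m, i = m + 1 := ⟨i - 1, by omega⟩
    have := h3 j (Finset.mem_range.mpr (by omega))
    exact this
  · rintro ⟨h1, h2, h3⟩
    refine ⟨⟨h1, h2⟩, fun i hi => ?_⟩
    have hi' := Finset.mem_range.mp hi
    have := h3 (i+1) (by omega) (by omega)
    exact this
end

section
/- Assume k_1 ≠ 0, b_n ≠ 0, and k_{i+1} b_i − k_i a_i ≠ 0 for 1 ≤ i ≤ n−1, so that A_1 is invertible. Then the inverse A_1^{−1} is a lower Hessenberg matrix: (A_1^{−1})_{ij} = 0 whenever j − i > 1. -/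
/-- If `k₁ ≠ 0`, `bₙ ≠ 0`, and `k_{i+1} bᵢ - kᵢ aᵢ ≠ 0` for
`1 ≤ i ≤ n-1`, then `A₁⁻¹` is lower Hessenberg: `(A₁⁻¹)_{ij} = 0` for `j - i > 1`. -/
theorem stmt_4 {F : Type*} [Field F] {n : ℕ} (hn : 2 ≤ n)
    (a b k : ℕ → F)
    (A₁ : Matrix (Fin n) (Fin n) F)
    (hA : ∀ i j : Fin n, A₁ i j =
      if (i : ℕ) ≤ (j : ℕ) then k ((i : ℕ) + 1) * b ((j : ℕ) + 1)
      else k ((j : ℕ) + 1) * a ((j : ℕ) + 1))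
    (hk1 : k 1 ≠ 0) (hbn : b n ≠ 0)
    (hc : ∀ i : ℕ, 1 ≤ i → i ≤ n - 1 → k (i + 1) * b i - k i * a i ≠ 0) :
    ∀ i j : Fin n, (j : ℕ) > (i : ℕ) + 1 → A₁⁻¹ i j = 0 := by
  intro i j hij
  by_cases hdet : IsUnit A₁.det
  swap
  · simp [Matrix.nonsing_inv_apply_not_isUnit A₁ hdet]
  have hmul := Matrix.mul_nonsing_inv A₁ hdet
  have hjn : (j : ℕ) < n := j.isLt
  -- row equations for the j-th column of the inverse
  have hrow : ∀ q : ℕ, q < (j : ℕ) →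
      k (q + 1) * (∑ c : Fin n, if q ≤ (c : ℕ) then b ((c : ℕ) + 1) * A₁⁻¹ c j else 0)
        + (∑ c : Fin n, if (c : ℕ) < q then k ((c : ℕ) + 1) * a ((c : ℕ) + 1) * A₁⁻¹ c j else 0)
        = 0 := by
    intro q hq
    have hqn : q < n := lt_trans hq hjn
    have h1 : (A₁ * A₁⁻¹) ⟨q, hqn⟩ j = (1 : Matrix (Fin n) (Fin n) F) ⟨q, hqn⟩ j := by
      rw [hmul]
    rw [Matrix.mul_apply, Matrix.one_apply_ne (Fin.ne_of_val_ne (Nat.ne_of_lt hq))] at h1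
    have hsplit : (∑ c : Fin n, A₁ ⟨q, hqn⟩ c * A₁⁻¹ c j) =
        k (q + 1) * (∑ c : Fin n, if q ≤ (c : ℕ) then b ((c : ℕ) + 1) * A₁⁻¹ c j else 0)
        + (∑ c : Fin n, if (c : ℕ) < q then
            k ((c : ℕ) + 1) * a ((c : ℕ) + 1) * A₁⁻¹ c j else 0) := by
      rw [Finset.mul_sum, ← Finset.sum_add_distrib]
      refine Finset.sum_congr rfl fun c _ => ?_
      have hval : (((⟨q, hqn⟩ : Fin n) : ℕ)) = q := rfl
      rw [hA]
      simp only [hval]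
      by_cases h : q ≤ (c : ℕ)
      · rw [if_pos h, if_pos h, if_neg (by omega)]; ring
      · rw [if_neg h, if_neg h, if_pos (by omega)]; ring
    rw [hsplit] at h1
    exact h1
  -- main induction
  have main : ∀ p : ℕ, p < (j : ℕ) →
      (∀ c : Fin n, (c : ℕ) < p → A₁⁻¹ c j = 0) ∧
      (∑ c : Fin n, if p ≤ (c : ℕ) then b ((c : ℕ) + 1) * A₁⁻¹ c j else 0) = 0 := by
    intro p
    induction p with
    | zero =>
      intro _
      refine ⟨fun c hc' => absurd hc' (by omega), ?_⟩
      have h0 := hrow 0 (by omega)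
      have hz : (∑ c : Fin n, if (c : ℕ) < 0 then
          k ((c : ℕ) + 1) * a ((c : ℕ) + 1) * A₁⁻¹ c j else 0) = 0 :=
        Finset.sum_eq_zero (by simp)
      rw [hz, add_zero] at h0
      simpa using (mul_eq_zero.mp h0).resolve_left hk1
    | succ p ih =>
      intro hp
      obtain ⟨ih1, ih2⟩ := ih (by omega)
      have hpn : p < n := by omega
      set cp : Fin n := ⟨p, hpn⟩ with hcp
      have hcpv : ((cp : Fin n) : ℕ) = p := rfl
      set X := A₁⁻¹ cp j with hX
      have hq := hrow (p + 1) hp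
      -- rewrite the lower-triangular sum
      have hT : (∑ c : Fin n, if (c : ℕ) < p + 1 then
          k ((c : ℕ) + 1) * a ((c : ℕ) + 1) * A₁⁻¹ c j else 0)
          = k (p + 1) * a (p + 1) * X := by
        have e : ∀ c ∈ (Finset.univ : Finset (Fin n)),
            (if (c : ℕ) < p + 1 then k ((c : ℕ) + 1) * a ((c : ℕ) + 1) * A₁⁻¹ c j else 0)
            = (if c = cp then k ((c : ℕ) + 1) * a ((c : ℕ) + 1) * A₁⁻¹ c j else 0) := by
          intro c _
          by_cases h : c = cp
          · subst h; rw [if_pos (by omega), if_pos rfl]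
          · have hne : (c : ℕ) ≠ p := fun hh => h (Fin.ext (by rw [hcpv, hh]))
            by_cases h2 : (c : ℕ) < p + 1
            · rw [if_pos h2, if_neg h, ih1 c (by omega), mul_zero]
            · rw [if_neg h2, if_neg h]
        rw [Finset.sum_congr rfl e,
          Finset.sum_ite_eq' Finset.univ cp
            (fun c : Fin n => k ((c : ℕ) + 1) * a ((c : ℕ) + 1) * A₁⁻¹ c j),
          if_pos (Finset.mem_univ cp), hcpv, ← hX]
      -- split off the p-th term of the S-sum
      have hS : (∑ c : Fin n, if p ≤ (c : ℕ) then b ((c : ℕ) + 1) * A₁⁻¹ c j else 0)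
          = b (p + 1) * X +
            (∑ c : Fin n, if p + 1 ≤ (c : ℕ) then b ((c : ℕ) + 1) * A₁⁻¹ c j else 0) := by
        have e : ∀ c ∈ (Finset.univ : Finset (Fin n)),
            (if p ≤ (c : ℕ) then b ((c : ℕ) + 1) * A₁⁻¹ c j else 0)
            = (if c = cp then b ((c : ℕ) + 1) * A₁⁻¹ c j else 0) +
              (if p + 1 ≤ (c : ℕ) then b ((c : ℕ) + 1) * A₁⁻¹ c j else 0) := by
          intro c _
          by_cases h : c = cp
          · subst h
            rw [if_pos (by omega), if_pos rfl, if_neg (by omega), add_zero]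
          · have hne : (c : ℕ) ≠ p := fun hh => h (Fin.ext (by rw [hcpv, hh]))
            rw [if_neg h, zero_add]
            by_cases h2 : p ≤ (c : ℕ)
            · rw [if_pos h2, if_pos (by omega)]
            · rw [if_neg h2, if_neg (by omega)]
        rw [Finset.sum_congr rfl e, Finset.sum_add_distrib,
          Finset.sum_ite_eq' Finset.univ cp
            (fun c : Fin n => b ((c : ℕ) + 1) * A₁⁻¹ c j),
          if_pos (Finset.mem_univ cp), hcpv, ← hX]
      have hSp1 : (∑ c : Fin n, if p + 1 ≤ (c : ℕ) then b ((c : ℕ) + 1) * A₁⁻¹ c j else 0)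
          = -(b (p + 1) * X) := by
        rw [hS] at ih2
        linear_combination ih2
      rw [hT, hSp1] at hq
      have hne := hc (p + 1) (by omega) (by omega)
      have h2 : (k (p + 1 + 1) * b (p + 1) - k (p + 1) * a (p + 1)) * X = 0 := by
        linear_combination -hq
      have hX0 : X = 0 := (mul_eq_zero.mp h2).resolve_left hne
      refine ⟨fun c hc' => ?_, by rw [hSp1, hX0, mul_zero, neg_zero]⟩
      by_cases h : (c : ℕ) < p
      · exact ih1 c h
      · have hcc : c = cp := Fin.ext (by rw [hcpv]; omega)
        rw [hcc, ← hX, hX0]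
  exact (main ((j : ℕ) - 1) (by omega)).1 i (by omega)
end

section
/- Assume k_i ≠ 0 for all 1 ≤ i ≤ n. Let E be the n×n upper bidiagonal matrix with E_{ii} = 1 for all i, E_{i,i+1} = −k_i/k_{i+1} for 1 ≤ i ≤ n−1, and all other entries 0. Then E · A_1 is the lower triangular matrix T with, setting k_{n+1} = 1: T_{ii} = (k_i/k_{i+1})(k_{i+1} b_i − k_i a_i) for 1 ≤ i ≤ n−1, T_{nn} = k_n b_n, T_{ij} = (k_j a_j / k_{i+1})(k_{i+1} − k_i) for 1 ≤ j < i ≤ n−1, T_{nj} = k_j a_j for 1 ≤ j ≤ n−1, and T_{ij} = 0 for j > i. -/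
/-- With `kᵢ ≠ 0` for `1 ≤ i ≤ n` and `k_{n+1} = 1`, the upper
bidiagonal matrix `E` (diagonal 1's, superdiagonal `-kᵢ/k_{i+1}`) satisfies
`E * A₁ = T`, where `T` is the stated lower triangular matrix. -/
theorem stmt_5 {F : Type*} [Field F] {n : ℕ} (hn : 2 ≤ n)
    (a b k : ℕ → F)
    (A₁ E T : Matrix (Fin n) (Fin n) F)
    (hA : ∀ i j : Fin n, A₁ i j =
      if (i : ℕ) ≤ (j : ℕ) then k ((i : ℕ) + 1) * b ((j : ℕ) + 1)
      else k ((j : ℕ) + 1) * a ((j : ℕ) + 1))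
    (hk : ∀ i : ℕ, 1 ≤ i → i ≤ n → k i ≠ 0)
    (hkn1 : k (n + 1) = 1)
    (hE : ∀ i j : Fin n, E i j =
      if i = j then 1
      else if (j : ℕ) = (i : ℕ) + 1 then -(k ((i : ℕ) + 1) / k ((i : ℕ) + 2))
      else 0)
    (hT : ∀ i j : Fin n, T i j =
      if (i : ℕ) < (j : ℕ) then 0
      else if i = j then
        (if (i : ℕ) + 1 = n then k n * b n
         else (k ((i : ℕ) + 1) / k ((i : ℕ) + 2)) *
           (k ((i : ℕ) + 2) * b ((i : ℕ) + 1) - k ((i : ℕ) + 1) * a ((i : ℕ) + 1)))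
      else
        (if (i : ℕ) + 1 = n then k ((j : ℕ) + 1) * a ((j : ℕ) + 1)
         else (k ((j : ℕ) + 1) * a ((j : ℕ) + 1) / k ((i : ℕ) + 2)) *
           (k ((i : ℕ) + 2) - k ((i : ℕ) + 1)))) :
    E * A₁ = T := by
  ext i j
  rw [Matrix.mul_apply]
  by_cases hi : (i:ℕ) + 1 = n
  · -- last row
    have hsum : ∀ l : Fin n, E i l * A₁ l j = if i = l then A₁ l j else 0 := by
      intro l
      rw [hE]
      by_cases h1 : i = l
      · simp [h1]
      · rw [if_neg h1]
        have h2 : ¬ ((l:ℕ) = (i:ℕ) + 1) := by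
          have := l.isLt; omega
        rw [if_neg h2, if_neg h1]; ring
    rw [Finset.sum_congr rfl (fun l _ => hsum l), Finset.sum_ite_eq,
      if_pos (Finset.mem_univ i), hA, hT]
    have hj : (j:ℕ) < n := j.isLt
    by_cases hij : (i:ℕ) < (j:ℕ)
    · omega
    · by_cases heq : i = j
      · subst heq
        rw [if_neg hij, if_pos rfl, if_pos hi, if_pos (le_refl _), hi]
      · have hji : ¬ ((i:ℕ) ≤ (j:ℕ)) := by
          intro h; exact heq (Fin.ext (le_antisymm h (not_lt.mp hij)))
        rw [if_neg hji, if_neg hij, if_neg heq, if_pos hi]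
  · -- i+1 < n
    have hilt : (i:ℕ) + 1 < n := lt_of_le_of_ne (Nat.succ_le_of_lt i.isLt) hi
    set i' : Fin n := ⟨(i:ℕ)+1, hilt⟩ with hi'
    have hii' : (i':ℕ) = (i:ℕ)+1 := rfl
    have hk2 : k ((i:ℕ)+2) ≠ 0 := hk _ (by omega) (by omega)
    have hsum : ∀ l : Fin n, E i l * A₁ l j =
        (if i = l then A₁ l j else 0) +
        (if l = i' then -(k ((i:ℕ)+1) / k ((i:ℕ)+2)) * A₁ l j else 0) := by
      intro l
      rw [hE]
      by_cases h1 : i = l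
      · have hne : l ≠ i' := by
          intro h
          apply_fun (Fin.val) at h
          rw [hii'] at h
          omega
        subst h1
        rw [if_neg hne]
        simp
      · rw [if_neg h1]
        by_cases h2 : (l:ℕ) = (i:ℕ)+1
        · have heq : l = i' := Fin.ext h2
          rw [if_pos h2, if_neg h1, if_pos heq]
          ring
        · have hne : l ≠ i' := by intro h; apply h2; rw [h]
          rw [if_neg h2, if_neg h1, if_neg hne]; ring
    rw [Finset.sum_congr rfl (fun l _ => hsum l), Finset.sum_add_distrib,
      Finset.sum_ite_eq, Finset.sum_ite_eq', if_pos (Finset.mem_univ i),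
      if_pos (Finset.mem_univ i'), hT, hA, hA, hii']
    by_cases hij : (i:ℕ) < (j:ℕ)
    · rw [if_pos hij, if_pos (le_of_lt hij), if_pos (by omega : (i:ℕ)+1 ≤ (j:ℕ))]
      field_simp
      ring
    · by_cases heq : i = j
      · have hje : (j:ℕ) = (i:ℕ) := by rw [heq]
        rw [if_neg hij, if_pos heq, if_neg hi, if_pos (by omega : (i:ℕ) ≤ (j:ℕ)),
          if_neg (by omega : ¬ ((i:ℕ)+1 ≤ (j:ℕ))), hje]
        field_simp
        ring
      · have hji : (j:ℕ) < (i:ℕ) := by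
          rcases lt_or_eq_of_le (not_lt.mp hij) with h | h
          · exact h
          · exact absurd (Fin.ext h.symm) heq
        rw [if_neg hij, if_neg heq, if_neg hi,
          if_neg (by omega : ¬ ((i:ℕ) ≤ (j:ℕ))),
          if_neg (by omega : ¬ ((i:ℕ)+1 ≤ (j:ℕ)))]
        field_simp
        ring
end

section
/- Assume k_i ≠ 0 for 1 ≤ i ≤ n and g_i ≠ 0 for 2 ≤ i ≤ n−1, and set k_{n+1} = 1. Let E_1 be the n×n matrix with 1's on the diagonal, entries −k_i/k_{i+1} on the superdiagonal (positions (i,i+1), 1 ≤ i ≤ n−1), and zeros elsewhere; let E_2 be the n×n matrix with 1's on the diagonal, entries −(k_i g_i)/(k_{i+1} g_{i−1}) in positions (i, i−1) for 3 ≤ i ≤ n, and zeros elsewhere. Then E_2 · E_1 · A_1 is the lower bidiagonal matrix with main diagonal entries k_i c_i/k_{i+1} for 1 ≤ i ≤ n (where k_{n+1} = 1), subdiagonal entry (2,1) equal to k_1 a_1 g_2/k_3, and subdiagonal entries (i+1, i) equal to k_i k_{i+1} g_{i+1} f_i/(k_{i+2} g_i) for 2 ≤ i ≤ n−1 (with k_{n+1}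 = 1 and g_n = 1), all other entries being 0. -/
lemma aux_sum {n : ℕ} {F : Type*} [AddCommMonoid F] (t : ℕ) (x : Fin n → F) :
    (∑ m : Fin n, if (m : ℕ) = t then x m else 0) =
      if h : t < n then x ⟨t, h⟩ else 0 := by
  split_ifs with h
  · rw [Finset.sum_eq_single_of_mem ⟨t, h⟩ (Finset.mem_univ _)]
    · simp
    · intro m _ hm
      rw [if_neg]
      intro he
      exact hm (Fin.ext he)
  · apply Finset.sum_eq_zero
    intro m _
    rw [if_neg]
    have := m.isLt
    omega

set_option maxHeartbeats 1000000

/-- With `kᵢ ≠ 0` (`1 ≤ i ≤ n`), `gᵢ ≠ 0` (`2 ≤ i ≤ n-1`) and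
`k_{n+1} = 1`, the matrices `E₁` (unit diagonal, superdiagonal `-kᵢ/k_{i+1}`)
and `E₂` (unit diagonal, entries `-(kᵢgᵢ)/(k_{i+1}g_{i-1})` at `(i,i-1)` for
`3 ≤ i ≤ n`) satisfy `E₂ * E₁ * A₁ = L`, the stated lower bidiagonal matrix. -/
theorem stmt_6 {F : Type*} [Field F] {n : ℕ} (hn : 3 ≤ n)
    (a b k c f g : ℕ → F)
    (A₁ E₁ E₂ L : Matrix (Fin n) (Fin n) F)
    (hA : ∀ i j : Fin n, A₁ i j =
      if (i : ℕ) ≤ (j : ℕ) then k ((i : ℕ) + 1) * b ((j : ℕ) + 1)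
      else k ((j : ℕ) + 1) * a ((j : ℕ) + 1))
    (hc0 : c 0 = 1)
    (hc : ∀ i : ℕ, 1 ≤ i → i ≤ n - 1 → c i = k (i + 1) * b i - k i * a i)
    (hcn : c n = b n)
    (hf : ∀ i : ℕ, 2 ≤ i → i ≤ n - 1 → f i = a i - b i)
    (hg : ∀ i : ℕ, 2 ≤ i → i ≤ n - 1 → g i = k (i + 1) - k i)
    (hgn : g n = 1)
    (hk : ∀ i : ℕ, 1 ≤ i → i ≤ n → k i ≠ 0)
    (hgne : ∀ i : ℕ, 2 ≤ i → i ≤ n - 1 → g i ≠ 0)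
    (hkn1 : k (n + 1) = 1)
    (hE1 : ∀ i j : Fin n, E₁ i j =
      if i = j then 1
      else if (j : ℕ) = (i : ℕ) + 1 then -(k ((i : ℕ) + 1) / k ((i : ℕ) + 2))
      else 0)
    (hE2 : ∀ i j : Fin n, E₂ i j =
      if i = j then 1
      else if (i : ℕ) = (j : ℕ) + 1 ∧ 3 ≤ (i : ℕ) + 1 then
        -((k ((i : ℕ) + 1) * g ((i : ℕ) + 1)) / (k ((i : ℕ) + 2) * g (i : ℕ)))
      else 0)
    (hL : ∀ i j : Fin n, L i j =
      if i = j then k ((i : ℕ) + 1) * c ((i : ℕ) + 1) / k ((i : ℕ) + 2)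
      else if (i : ℕ) = (j : ℕ) + 1 then
        (if (j : ℕ) = 0 then k 1 * a 1 * g 2 / k 3
         else k ((j : ℕ) + 1) * k ((j : ℕ) + 2) * g ((j : ℕ) + 2) * f ((j : ℕ) + 1) /
           (k ((j : ℕ) + 3) * g ((j : ℕ) + 1)))
      else 0) :
    E₂ * E₁ * A₁ = L := by
  have hk' : ∀ m : ℕ, 1 ≤ m → m ≤ n + 1 → k m ≠ 0 := by
    intro m h1 h2
    rcases eq_or_lt_of_le h2 with he | hl
    · rw [he, hkn1]; exact one_ne_zero
    · exact hk m h1 (by omega)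
  have hg' : ∀ m : ℕ, 2 ≤ m → m ≤ n → g m ≠ 0 := by
    intro m h1 h2
    rcases eq_or_lt_of_le h2 with he | hl
    · rw [he, hgn]; exact one_ne_zero
    · exact hgne m h1 (by omega)
  have hM : ∀ l j : Fin n, (E₁ * A₁) l j =
      A₁ l j + (if h : (l : ℕ) + 1 < n then
        -(k ((l : ℕ) + 1) / k ((l : ℕ) + 2)) * A₁ ⟨(l : ℕ) + 1, h⟩ j else 0) := by
    intro l j
    rw [Matrix.mul_apply]
    have key : ∀ m : Fin n, E₁ l m * A₁ m j =
        (if m = l then A₁ m j else 0) +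
        (if (m : ℕ) = (l : ℕ) + 1 then -(k ((l : ℕ) + 1) / k ((l : ℕ) + 2)) * A₁ m j else 0) := by
      intro m
      rw [hE1]
      by_cases h1 : l = m
      · subst h1
        rw [if_pos rfl, if_pos rfl, if_neg (by omega), one_mul, add_zero]
      · rw [if_neg h1, if_neg (Ne.symm h1), zero_add]
        by_cases h2 : (m : ℕ) = (l : ℕ) + 1
        · rw [if_pos h2, if_pos h2]
        · rw [if_neg h2, if_neg h2, zero_mul]
    rw [Finset.sum_congr rfl (fun m _ => key m), Finset.sum_add_distrib,
      Finset.sum_ite_eq' Finset.univ l (fun m => A₁ m j), if_pos (Finset.mem_univ l),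
      aux_sum ((l : ℕ) + 1) (fun m => -(k ((l : ℕ) + 1) / k ((l : ℕ) + 2)) * A₁ m j)]
  have hR : ∀ (i j : Fin n), (E₂ * (E₁ * A₁)) i j =
      (E₁ * A₁) i j + (if h : 2 ≤ (i : ℕ) then
        -((k ((i : ℕ) + 1) * g ((i : ℕ) + 1)) / (k ((i : ℕ) + 2) * g (i : ℕ))) *
          (E₁ * A₁) ⟨(i : ℕ) - 1, by omega⟩ j else 0) := by
    intro i j
    rw [Matrix.mul_apply]
    by_cases h2 : 2 ≤ (i : ℕ)
    · have key : ∀ m : Fin n, E₂ i m * (E₁ * A₁) m j =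
          (if m = i then (E₁ * A₁) m j else 0) +
          (if (m : ℕ) = (i : ℕ) - 1 then
            -((k ((i : ℕ) + 1) * g ((i : ℕ) + 1)) / (k ((i : ℕ) + 2) * g (i : ℕ))) *
              (E₁ * A₁) m j
          else 0) := by
        intro m
        rw [hE2]
        by_cases h1 : i = m
        · subst h1
          rw [if_pos rfl, if_pos rfl, if_neg (by omega), one_mul, add_zero]
        · rw [if_neg h1, if_neg (Ne.symm h1), zero_add]
          by_cases h3 : (m : ℕ) = (i : ℕ) - 1
          · rw [if_pos ⟨by omega, by omega⟩, if_pos h3]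
          · rw [if_neg (by omega), if_neg h3, zero_mul]
      rw [Finset.sum_congr rfl (fun m _ => key m), Finset.sum_add_distrib,
        Finset.sum_ite_eq' Finset.univ i (fun m => (E₁ * A₁) m j), if_pos (Finset.mem_univ i),
        aux_sum ((i : ℕ) - 1) (fun m =>
          -((k ((i : ℕ) + 1) * g ((i : ℕ) + 1)) / (k ((i : ℕ) + 2) * g (i : ℕ))) *
            (E₁ * A₁) m j),
        dif_pos h2, dif_pos (show (i : ℕ) - 1 < n by have := i.isLt; omega)]
    · have key : ∀ m : Fin n, E₂ i m * (E₁ * A₁) m j =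
          (if m = i then (E₁ * A₁) m j else 0) := by
        intro m
        rw [hE2]
        by_cases h1 : i = m
        · subst h1; rw [if_pos rfl, if_pos rfl, one_mul]
        · rw [if_neg h1, if_neg (fun hcon => h2 (by omega)), if_neg (Ne.symm h1), zero_mul]
      rw [Finset.sum_congr rfl (fun m _ => key m),
        Finset.sum_ite_eq' Finset.univ i (fun m => (E₁ * A₁) m j), if_pos (Finset.mem_univ i),
        dif_neg h2, add_zero]
  ext i j
  have hI := i.isLt
  have hJ := j.isLt
  rw [Matrix.mul_assoc, hR i j, hL i j]
  rcases lt_trichotomy (i : ℕ) (j : ℕ) with hlt | heq | hgt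
  -- CASE 1: strictly above diagonal
  · rw [if_neg (fun h => by rw [h] at hlt; exact lt_irrefl _ hlt),
      if_neg (show ¬(i : ℕ) = (j : ℕ) + 1 by omega)]
    by_cases h2 : 2 ≤ (i : ℕ)
    · rw [dif_pos h2]
      simp only [hM, hA]
      split_ifs <;> try (exfalso; omega)
      simp only [show (i : ℕ) - 1 + 1 = (i : ℕ) by omega,
        show (i : ℕ) - 1 + 2 = (i : ℕ) + 1 by omega,
        show (i : ℕ) - 1 + 1 + 1 = (i : ℕ) + 1 by omega,
        show (i : ℕ) + 1 + 1 = (i : ℕ) + 2 by omega]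
      have n1 : k ((i : ℕ) + 1) ≠ 0 := hk' _ (by omega) (by omega)
      have n2 : k ((i : ℕ) + 2) ≠ 0 := hk' _ (by omega) (by omega)
      have n3 : g (i : ℕ) ≠ 0 := hg' _ (by omega) (by omega)
      field_simp
      ring
    · rw [dif_neg h2, add_zero]
      simp only [hM, hA]
      split_ifs <;> try (exfalso; omega)
      simp only [show (i : ℕ) + 1 + 1 = (i : ℕ) + 2 by omega]
      have n2 : k ((i : ℕ) + 2) ≠ 0 := hk' _ (by omega) (by omega)
      field_simp
      ring
  -- CASE 2: diagonal
  · rw [if_pos (Fin.ext heq)]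
    by_cases h2 : 2 ≤ (i : ℕ)
    · rw [dif_pos h2]
      by_cases h3 : (i : ℕ) + 1 < n
      · simp only [hM, hA]
        split_ifs <;> try (exfalso; omega)
        simp only [heq]
        simp only [show (j : ℕ) - 1 + 1 = (j : ℕ) by omega,
          show (j : ℕ) - 1 + 2 = (j : ℕ) + 1 by omega,
          show (j : ℕ) - 1 + 1 + 1 = (j : ℕ) + 1 by omega,
          show (j : ℕ) + 1 + 1 = (j : ℕ) + 2 by omega]
        rw [hc ((j : ℕ) + 1) (by omega) (by omega)]
        have n1 : k ((j : ℕ) + 1) ≠ 0 := hk' _ (by omega) (by omega)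
        have n2 : k ((j : ℕ) + 2) ≠ 0 := hk' _ (by omega) (by omega)
        have n3 : g (j : ℕ) ≠ 0 := hg' _ (by omega) (by omega)
        field_simp
        ring
      · simp only [hM, hA]
        split_ifs <;> try (exfalso; omega)
        simp only [heq]
        simp only [show (j : ℕ) - 1 + 1 = (j : ℕ) by omega,
          show (j : ℕ) - 1 + 2 = (j : ℕ) + 1 by omega,
          show (j : ℕ) - 1 + 1 + 1 = (j : ℕ) + 1 by omega]
        rw [show (j : ℕ) + 1 = n by omega, hcn,
          show (j : ℕ) + 2 = n + 1 by omega, hkn1]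
        have n1 : k n ≠ 0 := hk' _ (by omega) (by omega)
        have n3 : g (j : ℕ) ≠ 0 := hg' _ (by omega) (by omega)
        field_simp
        ring
    · rw [dif_neg h2, add_zero]
      have h3 : (i : ℕ) + 1 < n := by omega
      simp only [hM, hA]
      split_ifs <;> try (exfalso; omega)
      simp only [heq]
      try simp only [show (j : ℕ) + 1 + 1 = (j : ℕ) + 2 by omega]
      rw [hc ((j : ℕ) + 1) (by omega) (by omega)]
      have n2 : k ((j : ℕ) + 2) ≠ 0 := hk' _ (by omega) (by omega)
      field_simp
      ring
  -- CASE 3: below diagonal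
  · rw [if_neg (fun h => by rw [h] at hgt; exact lt_irrefl _ hgt)]
    by_cases hsub : (i : ℕ) = (j : ℕ) + 1
    · rw [if_pos hsub]
      by_cases hj0 : (j : ℕ) = 0
      · rw [if_pos hj0]
        have h2 : ¬ 2 ≤ (i : ℕ) := by omega
        rw [dif_neg h2, add_zero]
        simp only [hM, hA]
        split_ifs <;> try (exfalso; omega)
        simp only [hsub, hj0]
        norm_num
        rw [hg 2 le_rfl (by omega)]
        have n2 : k 2 ≠ 0 := hk' _ (by omega) (by omega)
        have n3 : k 3 ≠ 0 := hk' _ (by omega) (by omega)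
        field_simp
        ring
      · rw [if_neg hj0]
        have h2 : 2 ≤ (i : ℕ) := by omega
        rw [dif_pos h2]
        by_cases h3 : (i : ℕ) + 1 < n
        · -- interior subdiagonal
          simp only [hM, hA]
          split_ifs <;> try (exfalso; omega)
          simp only [hsub, Nat.add_sub_cancel,
            show (j : ℕ) + 1 + 1 = (j : ℕ) + 2 by omega,
            show (j : ℕ) + 1 + 2 = (j : ℕ) + 3 by omega]
          have hd : k ((j : ℕ) + 2) - k ((j : ℕ) + 1) ≠ 0 := by
            rw [← hg ((j : ℕ) + 1) (by omega) (by omega)]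
            exact hgne _ (by omega) (by omega)
          rw [hg ((j : ℕ) + 2) (by omega) (by omega), hg ((j : ℕ) + 1) (by omega) (by omega),
            hf ((j : ℕ) + 1) (by omega) (by omega)]
          have n1 : k ((j : ℕ) + 2) ≠ 0 := hk' _ (by omega) (by omega)
          have n2 : k ((j : ℕ) + 3) ≠ 0 := hk' _ (by omega) (by omega)
          field_simp
          ring
        · -- last-row subdiagonal
          simp only [hM, hA]
          split_ifs <;> try (exfalso; omega)
          simp only [hsub, Nat.add_sub_cancel,
            show (j : ℕ) + 1 + 1 = (j : ℕ) + 2 by omega,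
            show (j : ℕ) + 1 + 2 = (j : ℕ) + 3 by omega]
          have hd : k n - k ((j : ℕ) + 1) ≠ 0 := by
            have h := hgne ((j : ℕ) + 1) (by omega) (by omega)
            rw [hg ((j : ℕ) + 1) (by omega) (by omega),
              show (j : ℕ) + 1 + 1 = n by omega] at h
            exact h
          rw [hg ((j : ℕ) + 1) (by omega) (by omega), hf ((j : ℕ) + 1) (by omega) (by omega)]
          simp only [show (j : ℕ) + 1 + 1 = (j : ℕ) + 2 by omega]
          rw [show (j : ℕ) + 2 = n by omega, hgn, show (j : ℕ) + 3 = n + 1 by omega, hkn1]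
          have n1 : k n ≠ 0 := hk' _ (by omega) (by omega)
          field_simp
          ring
    · rw [if_neg hsub]
      have h2 : 2 ≤ (i : ℕ) := by omega
      rw [dif_pos h2]
      by_cases h3 : (i : ℕ) + 1 < n
      · simp only [hM, hA]
        split_ifs <;> try (exfalso; omega)
        simp only [show (i : ℕ) - 1 + 1 = (i : ℕ) by omega,
          show (i : ℕ) - 1 + 2 = (i : ℕ) + 1 by omega,
          show (i : ℕ) + 1 + 1 = (i : ℕ) + 2 by omega]
        have hd : k ((i : ℕ) + 1) - k (i : ℕ) ≠ 0 := by
          rw [← hg (i : ℕ) (by omega) (by omega)]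
          exact hgne _ (by omega) (by omega)
        rw [hg ((i : ℕ) + 1) (by omega) (by omega), hg (i : ℕ) (by omega) (by omega)]
        have n1 : k ((i : ℕ) + 1) ≠ 0 := hk' _ (by omega) (by omega)
        have n2 : k ((i : ℕ) + 2) ≠ 0 := hk' _ (by omega) (by omega)
        field_simp
        ring
      · simp only [hM, hA]
        split_ifs <;> try (exfalso; omega)
        simp only [show (i : ℕ) - 1 + 1 = (i : ℕ) by omega,
          show (i : ℕ) - 1 + 2 = (i : ℕ) + 1 by omega,
          show (i : ℕ) + 1 + 1 = (i : ℕ) + 2 by omega]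
        have hd : k n - k (i : ℕ) ≠ 0 := by
          have h := hgne (i : ℕ) (by omega) (by omega)
          rw [hg (i : ℕ) (by omega) (by omega), show (i : ℕ) + 1 = n by omega] at h
          exact h
        rw [hg (i : ℕ) (by omega) (by omega),
          show (i : ℕ) + 1 = n by omega, hgn, show (i : ℕ) + 2 = n + 1 by omega, hkn1]
        have n1 : k n ≠ 0 := hk' _ (by omega) (by omega)
        field_simp
        ring
end

section
/- Let B be the n×n matrix over F with entries: B_{ij} = 0 if j − i > 1; B_{i,i+1} = −1/c_i for 1 ≤ i ≤ n−1; B_{11} = 1/c_1; B_{nn} = k_{n−1} b_{n−1}/(k_n c_{n−1} c_n); B_{ii} = (k_{i−1} b_{i−1} − k_{i+1} a_{i−1})/(c_{i−1} c_i) for 2 ≤ i ≤ n−1; and B_{ij} = (−1)^{i+j} d_{j−1} g_i (∏_{ν=j+1}^{i−1} k_ν f_ν) / (∏_{ν=j−1}^{i} c_ν) for i − j ≥ 1, where the product over an empty index range equals 1. Assume k_n ≠ 0 and c_i ≠ 0 for i = 1,…,n. Then A_2 · B = I, the n×n identity matrix. -/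
set_option maxHeartbeats 1600000 in
/-- With `A₂` the Brownian-type matrix `(A₂)_{ij} = kⱼbⱼ (i ≤ j)`,
`kᵢaⱼ (i > j)` (1-based), and `B` the lower Hessenberg matrix of formulae (8),
assuming `kₙ ≠ 0` and `cᵢ ≠ 0` for `i = 1,…,n`, we have `A₂ * B = 1`. -/
theorem stmt_10 {F : Type*} [Field F] {n : ℕ} (hn : 3 ≤ n)
    (a b k c d f g : ℕ → F)
    (A₂ B : Matrix (Fin n) (Fin n) F)
    (hA : ∀ i j : Fin n, A₂ i j =
      if (i : ℕ) ≤ (j : ℕ) then k ((j : ℕ) + 1) * b ((j : ℕ) + 1)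
      else k ((i : ℕ) + 1) * a ((j : ℕ) + 1))
    (hc0 : c 0 = 1)
    (hc : ∀ i : ℕ, 1 ≤ i → i ≤ n - 1 → c i = k i * b i - k (i + 1) * a i)
    (hcn : c n = b n)
    (hd0 : d 0 = a 1)
    (hd : ∀ i : ℕ, 1 ≤ i → i ≤ n - 2 →
      d i = k i * a (i + 1) * b i - k (i + 1) * a i * b (i + 1))
    (hf : ∀ i : ℕ, 2 ≤ i → i ≤ n - 1 → f i = a i - b i)
    (hg : ∀ i : ℕ, 2 ≤ i → i ≤ n - 1 → g i = k i - k (i + 1))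
    (hgn : g n = 1)
    (hB : ∀ i j : Fin n, B i j =
      if ((j : ℕ) + 1) > ((i : ℕ) + 1) + 1 then 0
      else if ((j : ℕ) + 1) = ((i : ℕ) + 1) + 1 then -1 / c ((i : ℕ) + 1)
      else if (i : ℕ) = (j : ℕ) then
        (if (i : ℕ) + 1 = 1 then 1 / c 1
         else if (i : ℕ) + 1 = n then k (n - 1) * b (n - 1) / (k n * c (n - 1) * c n)
         else (k (i : ℕ) * b (i : ℕ) - k ((i : ℕ) + 2) * a (i : ℕ)) /
           (c (i : ℕ) * c ((i : ℕ) + 1)))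
      else (-1 : F) ^ (((i : ℕ) + 1) + ((j : ℕ) + 1)) * d (j : ℕ) * g ((i : ℕ) + 1) *
        (∏ ν ∈ Finset.Icc ((j : ℕ) + 2) (i : ℕ), k ν * f ν) /
        ∏ ν ∈ Finset.Icc (j : ℕ) ((i : ℕ) + 1), c ν)
    (hkn : k n ≠ 0)
    (hcne : ∀ i : ℕ, 1 ≤ i → i ≤ n → c i ≠ 0) :
    A₂ * B = 1 := by
  have hc0' : c 0 ≠ 0 := by rw [hc0]; exact one_ne_zero
  have hQ : ∀ u t : ℕ, t ≤ n → (∏ ν ∈ Finset.Icc u t, c ν) ≠ 0 := by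
    intro u t ht
    apply Finset.prod_ne_zero_iff.mpr
    intro ν hν
    rw [Finset.mem_Icc] at hν
    rcases Nat.eq_zero_or_pos ν with h0 | h1
    · rw [h0]; exact hc0'
    · exact hcne ν h1 (le_trans hν.2 ht)
  have hbn : b n ≠ 0 := hcn ▸ hcne n (by omega) le_rfl
  ext i j
  rw [Matrix.mul_apply, Matrix.one_apply]
  have hin : (i : ℕ) < n := i.isLt
  have hjn : (j : ℕ) < n := j.isLt
  set G : ℕ → F := fun t =>
    if t = n then (if (i : ℕ) = (j : ℕ) then (1:F) else 0)
    else if t < (j : ℕ) then 0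
    else if t = (j : ℕ) then
      (if (j : ℕ) = 0 then 0
       else (if (i : ℕ) + 1 ≤ (j : ℕ) then k (j : ℕ) * b (j : ℕ)
             else k ((i : ℕ) + 1) * a (j : ℕ)) * (-1 / c (j : ℕ)))
    else (if (i : ℕ) = (j : ℕ) then (1:F) else 0) +
      (-1 : F) ^ (t + (j : ℕ) + 1) * d (j : ℕ) *
      (if (i : ℕ) + 1 ≤ t then k (t + 1) else k ((i : ℕ) + 1)) *
      (∏ ν ∈ Finset.Icc ((j : ℕ) + 2) t, k ν * f ν) /
      ∏ ν ∈ Finset.Icc (j : ℕ) t, c ν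
    with hGdef
  have Gn : G n = (if (i : ℕ) = (j : ℕ) then (1:F) else 0) := by
    simp only [hGdef, if_pos rfl]
  have G0 : G 0 = 0 := by
    simp only [hGdef]
    rw [if_neg (by omega)]
    by_cases h : (j : ℕ) = 0
    · rw [if_neg (by omega), if_pos h.symm, if_pos h]
    · rw [if_pos (by omega)]
  have Glt : ∀ t : ℕ, t < (j : ℕ) → G t = 0 := by
    intro t ht
    simp only [hGdef]
    rw [if_neg (by omega), if_pos ht]
  have Gj : 1 ≤ (j : ℕ) → G (j : ℕ) =
      (if (i : ℕ) + 1 ≤ (j : ℕ) then k (j : ℕ) * b (j : ℕ)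
       else k ((i : ℕ) + 1) * a (j : ℕ)) * (-1 / c (j : ℕ)) := by
    intro hj1
    simp only [hGdef]
    rw [if_neg (show ¬((j : ℕ) = n) from by omega),
      if_neg (show ¬((j : ℕ) < (j : ℕ)) from by omega)]
    simp only [eq_self_iff_true, if_true]
    rw [if_neg (show ¬((j : ℕ) = 0) from by omega)]
  have Gmain : ∀ t : ℕ, (j : ℕ) < t → t < n → G t =
      (if (i : ℕ) = (j : ℕ) then (1:F) else 0) +
      (-1 : F) ^ (t + (j : ℕ) + 1) * d (j : ℕ) *
      (if (i : ℕ) + 1 ≤ t then k (t + 1) else k ((i : ℕ) + 1)) *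
      (∏ ν ∈ Finset.Icc ((j : ℕ) + 2) t, k ν * f ν) /
      ∏ ν ∈ Finset.Icc (j : ℕ) t, c ν := by
    intro t h1 h2
    simp only [hGdef]
    rw [if_neg (by omega), if_neg (by omega), if_neg (by omega)]
  have key : ∀ x : Fin n, A₂ i x * B x j = G ((x : ℕ) + 1) - G (x : ℕ) := by
    intro x
    have hxn : (x : ℕ) < n := x.isLt
    rw [hA, hB]
    by_cases hb0 : (j : ℕ) + 1 > ((x : ℕ) + 1) + 1
    · -- far upper region: B entry is 0, both G values vanish
      rw [if_pos hb0, Glt _ (by omega), Glt _ (by omega)]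
      ring
    · rw [if_neg hb0]
      by_cases hb1 : (j : ℕ) + 1 = ((x : ℕ) + 1) + 1
      · -- superdiagonal entry
        rw [if_pos hb1, show (x : ℕ) + 1 = (j : ℕ) from by omega,
          Gj (by omega), Glt (x : ℕ) (by omega), sub_zero]
        split_ifs <;> first | rfl | omega
      · rw [if_neg hb1]
        by_cases hdiag : (x : ℕ) = (j : ℕ)
        · -- diagonal entry
          rw [if_pos hdiag, hdiag]
          by_cases hj0 : (j : ℕ) = 0
          · -- top-left corner of the diagonal
            rw [if_pos (show (j : ℕ) + 1 = 1 from by omega)]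
            rw [Gmain ((j : ℕ) + 1) (by omega) (by omega),
              show G (j : ℕ) = 0 from by rw [hj0]; exact G0, sub_zero]
            rw [show Finset.Icc ((j : ℕ) + 2) ((j : ℕ) + 1) = ∅ from
              Finset.Icc_eq_empty (by omega), Finset.prod_empty]
            rw [Finset.prod_Icc_succ_top (show (j : ℕ) ≤ (j : ℕ) + 1 from by omega),
              Finset.Icc_self, Finset.prod_singleton]
            rw [hj0, hc0, hd0, hc 1 (by omega) (by omega)]
            have hc1 : c 1 ≠ 0 := hcne 1 (by omega) (by omega)
            rw [hc 1 (by omega) (by omega)] at hc1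
            split_ifs <;> first | omega | (field_simp [hc1]; ring)
          · rw [if_neg (show ¬((j : ℕ) + 1 = 1) from by omega)]
            by_cases hxl : (j : ℕ) + 1 = n
            · -- bottom-right corner of the diagonal
              rw [if_pos hxl]
              rw [show G ((j : ℕ) + 1) = (if (i : ℕ) = (j : ℕ) then (1:F) else 0) from by
                rw [hxl]; exact Gn, Gj (by omega)]
              have hcn1 : c (n - 1) ≠ 0 := hcne _ (by omega) (by omega)
              by_cases hij : (i : ℕ) = (j : ℕ)
              · rw [if_pos (by omega), if_pos hij,
                  if_neg (show ¬((i : ℕ) + 1 ≤ (j : ℕ)) from by omega)]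
                rw [show (i : ℕ) + 1 = n from by omega,
                  show (j : ℕ) + 1 = n from hxl,
                  show (j : ℕ) = n - 1 from by omega]
                rw [hcn, hc (n - 1) (by omega) (by omega)]
                rw [hc (n - 1) (by omega) (by omega)] at hcn1
                simp only [show n - 1 + 1 = n from by omega] at hcn1 ⊢
                field_simp [hkn, hbn, hcn1]
                ring
              · rw [if_pos (by omega), if_neg hij,
                  if_pos (show (i : ℕ) + 1 ≤ (j : ℕ) from by omega)]
                rw [show (j : ℕ) + 1 = n from hxl, show (j : ℕ) = n - 1 from by omega]
                rw [hcn]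
                field_simp [hkn, hbn, hcn1]
                ring
            · -- interior diagonal entries
              rw [if_neg hxl]
              rw [Gmain ((j : ℕ) + 1) (by omega) (by omega), Gj (by omega)]
              rw [show Finset.Icc ((j : ℕ) + 2) ((j : ℕ) + 1) = ∅ from
                Finset.Icc_eq_empty (by omega), Finset.prod_empty]
              rw [Finset.prod_Icc_succ_top (show (j : ℕ) ≤ (j : ℕ) + 1 from by omega),
                Finset.Icc_self, Finset.prod_singleton]
              have hcj : c (j : ℕ) ≠ 0 := hcne _ (by omega) (by omega)
              have hcj1 : c ((j : ℕ) + 1) ≠ 0 := hcne _ (by omega) (by omega)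
              rw [hd (j : ℕ) (by omega) (by omega)]
              simp only [show (j : ℕ) + 1 + 1 = (j : ℕ) + 2 from by omega]
              rw [hc ((j : ℕ) + 1) (by omega) (by omega),
                hc (j : ℕ) (by omega) (by omega)]
              rw [hc ((j : ℕ) + 1) (by omega) (by omega)] at hcj1
              rw [hc (j : ℕ) (by omega) (by omega)] at hcj
              simp only [show (j : ℕ) + 1 + 1 = (j : ℕ) + 2 from by omega] at hcj1
              rcases Nat.lt_trichotomy (i : ℕ) (j : ℕ) with hij | hij | hij
              · rw [if_pos (le_of_lt hij), if_neg (by omega), if_pos (by omega),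
                  if_pos (by omega)]
                rw [show ((-1:F))^((j:ℕ)+1+(j:ℕ)+1) = 1 from by rw [show (j:ℕ)+1+(j:ℕ)+1 = 2*((j:ℕ)+1) from by ring, pow_mul]; norm_num]
                simp only [show (j : ℕ) + 1 + 1 = (j : ℕ) + 2 from by omega]
                field_simp [hcj, hcj1]
                ring
              · rw [hij]
                split_ifs <;> first | omega | (rw [show ((-1:F))^((j:ℕ)+1+(j:ℕ)+1) = 1 from by rw [show (j:ℕ)+1+(j:ℕ)+1 = 2*((j:ℕ)+1) from by ring, pow_mul]; norm_num]; simp only [show (j : ℕ) + 1 + 1 = (j : ℕ) + 2 from by omega]; field_simp [hcj, hcj1]; ring)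
              · rw [if_neg (by omega), if_neg (by omega), if_neg (by omega),
                  if_neg (by omega)]
                rw [show ((-1:F))^((j:ℕ)+1+(j:ℕ)+1) = 1 from by rw [show (j:ℕ)+1+(j:ℕ)+1 = 2*((j:ℕ)+1) from by ring, pow_mul]; norm_num]
                simp only [show (j : ℕ) + 1 + 1 = (j : ℕ) + 2 from by omega]
                generalize hC1 : k (j : ℕ) * b (j : ℕ) - k ((j : ℕ) + 1) * a (j : ℕ) = C1 at hcj ⊢
                generalize hC2 : k ((j : ℕ) + 1) * b ((j : ℕ) + 1) - k ((j : ℕ) + 2) * a ((j : ℕ) + 1) = C2 at hcj1 ⊢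
                field_simp [hcj, hcj1]
                subst hC1 hC2
                ring
        · -- strictly lower entries
          rw [if_neg hdiag]
          have hjx : (j : ℕ) < (x : ℕ) := by omega
          by_cases hxl : (x : ℕ) + 1 = n
          · -- last row
            rw [show G ((x : ℕ) + 1) = (if (i : ℕ) = (j : ℕ) then (1:F) else 0) from by
              rw [hxl]; exact Gn, Gmain (x : ℕ) hjx (by omega)]
            rw [show g ((x : ℕ) + 1) = 1 from by rw [hxl]; exact hgn]
            rw [Finset.prod_Icc_succ_top (show (j : ℕ) ≤ (x : ℕ) + 1 from by omega)]
            rw [show c ((x : ℕ) + 1) = b n from by rw [hxl]; exact hcn]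
            have hκ : (if (i : ℕ) + 1 ≤ (x : ℕ) then k ((x : ℕ) + 1)
                else k ((i : ℕ) + 1)) = k n := by
              split_ifs with h
              · rw [hxl]
              · rw [show (i : ℕ) + 1 = n from by omega]
            rw [hκ, if_pos (show (i : ℕ) ≤ (x : ℕ) from by omega)]
            rw [show k ((x : ℕ) + 1) = k n from by rw [hxl],
              show b ((x : ℕ) + 1) = b n from by rw [hxl]]
            have hQx : (∏ ν ∈ Finset.Icc (j : ℕ) (x : ℕ), c ν) ≠ 0 := hQ _ _ (by omega)
            field_simp [hbn, hQx]
            ring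
          · -- interior lower entries
            rw [Gmain ((x : ℕ) + 1) (by omega) (by omega), Gmain (x : ℕ) hjx (by omega)]
            rw [hg ((x : ℕ) + 1) (by omega) (by omega)]
            rw [Finset.prod_Icc_succ_top (show (j : ℕ) ≤ (x : ℕ) + 1 from by omega),
              Finset.prod_Icc_succ_top (show (j : ℕ) + 2 ≤ (x : ℕ) + 1 from by omega)]
            rw [hf ((x : ℕ) + 1) (by omega) (by omega)]
            have hQx : (∏ ν ∈ Finset.Icc (j : ℕ) (x : ℕ), c ν) ≠ 0 := hQ _ _ (by omega)
            have hcx1 : c ((x : ℕ) + 1) ≠ 0 := hcne _ (by omega) (by omega)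
            rw [hc ((x : ℕ) + 1) (by omega) (by omega)]
            rw [hc ((x : ℕ) + 1) (by omega) (by omega)] at hcx1
            have hκ0 : (if (i : ℕ) + 1 ≤ (x : ℕ) then k ((x : ℕ) + 1)
                else k ((i : ℕ) + 1)) =
                (if (i : ℕ) ≤ (x : ℕ) then k ((x : ℕ) + 1) else k ((i : ℕ) + 1)) := by
              split_ifs <;> first | rfl | omega |
                rw [show (i : ℕ) + 1 = (x : ℕ) + 1 from by omega]
            rw [hκ0]
            split_ifs <;> first | omega | (simp only [show (x : ℕ) + 1 + 1 = (x : ℕ) + 2 from by omega] at hcx1 ⊢; generalize hC : k ((x : ℕ) + 1) * b ((x : ℕ) + 1) - k ((x : ℕ) + 2) * a ((x : ℕ) + 1) = C at hcx1 ⊢; field_simp [hQx, hcx1]; subst hC; ring)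
  rw [Finset.sum_congr rfl (fun x _ => key x)]
  rw [Fin.sum_univ_eq_sum_range (fun m => G (m + 1) - G m) n]
  rw [Finset.sum_range_sub G n, Gn, G0, sub_zero]
  simp [Fin.ext_iff]
end

section
/- Let B be the n×n matrix over F with entries: B_{ij} = 0 if j − i > 1; B_{i,i+1} = −1/c_i for 1 ≤ i ≤ n−1; B_{11} = 1/c_1; B_{nn} = k_{n−1} b_{n−1}/(k_n c_{n−1} c_n); B_{ii} = (k_{i−1} b_{i−1} − k_{i+1} a_{i−1})/(c_{i−1} c_i) for 2 ≤ i ≤ n−1; and B_{ij} = (−1)^{i+j} d_{j−1} g_i (∏_{ν=j+1}^{i−1} k_ν f_ν) / (∏_{ν=j−1}^{i} c_ν) for i − j ≥ 1, where the product over an empty index range equals 1. Assume k_n ≠ 0 and c_i ≠ 0 for i = 1,…,n. Then B · A_2 = I, the n×n identity matrix. -/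
open Finset

lemma prodsplit {F : Type*} [CommMonoid F] (φ : ℕ → F) {x y : ℕ} (h : x ≤ y) :
    ∏ ν ∈ Finset.Icc x y, φ ν = φ x * ∏ ν ∈ Finset.Icc (x+1) y, φ ν := by
  rw [Finset.Icc_eq_cons_Ioc h, Finset.prod_cons, Finset.Icc_add_one_left_eq_Ioc]

lemma Qne {F : Type*} [Field F] {n : ℕ} (c : ℕ → F) (hc0 : c 0 = 1)
    (hcne : ∀ i : ℕ, 1 ≤ i → i ≤ n → c i ≠ 0)
    (x y : ℕ) (hy : y ≤ n) : (∏ ν ∈ Finset.Icc x y, c ν) ≠ 0 := by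
  rw [Finset.prod_ne_zero_iff]
  intro ν hν
  rcases Nat.eq_zero_or_pos ν with h0 | h1
  · rw [h0, hc0]; exact one_ne_zero
  · exact hcne ν h1 (le_trans (Finset.mem_Icc.mp hν).2 hy)

lemma sum1 {F : Type*} [Field F] {n : ℕ} (a b k c d f g : ℕ → F)
    (hc0 : c 0 = 1)
    (hc : ∀ i : ℕ, 1 ≤ i → i ≤ n - 1 → c i = k i * b i - k (i + 1) * a i)
    (hd0 : d 0 = a 1)
    (hd : ∀ i : ℕ, 1 ≤ i → i ≤ n - 2 →
      d i = k i * a (i + 1) * b i - k (i + 1) * a i * b (i + 1))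
    (hf : ∀ i : ℕ, 2 ≤ i → i ≤ n - 1 → f i = a i - b i)
    (hcne : ∀ i : ℕ, 1 ≤ i → i ≤ n → c i ≠ 0)
    (i0 : ℕ) (hi1 : 1 ≤ i0) (hin : i0 + 1 ≤ n) :
    ∀ j0 : ℕ, j0 + 1 ≤ i0 →
      ∑ l ∈ Finset.range (j0+1),
        ((-1:F) ^ ((i0+1) + (l+1)) * d l * g (i0+1) *
          (∏ ν ∈ Finset.Icc (l+2) i0, k ν * f ν) / ∏ ν ∈ Finset.Icc l (i0+1), c ν)
      = (-1:F) ^ (i0 + j0) * g (i0+1) * a (j0+1) *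
          (∏ ν ∈ Finset.Icc (j0+2) i0, k ν * f ν) / ∏ ν ∈ Finset.Icc (j0+1) (i0+1), c ν := by
  intro j0
  induction j0 with
  | zero =>
    intro _
    rw [Finset.sum_range_one, prodsplit c (Nat.zero_le (i0+1)), hc0, hd0]
    simp only [zero_add, add_zero]
    ring
  | succ m ih =>
    intro h
    have hm : m + 1 ≤ i0 := by omega
    rw [Finset.sum_range_succ, ih hm]
    rw [show m+1+1 = m+2 by omega, show m+1+2 = m+3 by omega]
    rw [prodsplit (fun ν => k ν * f ν) (show m+2 ≤ i0 by omega)]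
    rw [show m+2+1 = m+3 by omega]
    rw [prodsplit c (show m+1 ≤ i0+1 by omega)]
    rw [show m+1+1 = m+2 by omega]
    have key : d (m+1) = a (m+2) * c (m+1) + (k (m+2) * f (m+2)) * a (m+1) := by
      rw [hd (m+1) (by omega) (by omega), hf (m+2) (by omega) (by omega),
        hc (m+1) (by omega) (by omega)]
      ring
    have hcne1 : c (m+1) ≠ 0 := hcne (m+1) (by omega) (by omega)
    have hQ : (∏ ν ∈ Finset.Icc (m+2) (i0+1), c ν) ≠ 0 := Qne c hc0 hcne _ _ (by omega)
    rw [← add_div, div_eq_div_iff (mul_ne_zero hcne1 hQ) hQ]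
    linear_combination ((-1:F) ^ (i0+m+1) * g (i0+1) *
      (∏ ν ∈ Finset.Icc (m+3) i0, k ν * f ν) * (∏ ν ∈ Finset.Icc (m+2) (i0+1), c ν)) * key

lemma sum2 {F : Type*} [Field F] {n : ℕ} (a b k c d f g : ℕ → F)
    (hc0 : c 0 = 1)
    (hc : ∀ i : ℕ, 1 ≤ i → i ≤ n - 1 → c i = k i * b i - k (i + 1) * a i)
    (hd0 : d 0 = a 1)
    (hd : ∀ i : ℕ, 1 ≤ i → i ≤ n - 2 →
      d i = k i * a (i + 1) * b i - k (i + 1) * a i * b (i + 1))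
    (hf : ∀ i : ℕ, 2 ≤ i → i ≤ n - 1 → f i = a i - b i)
    (hcne : ∀ i : ℕ, 1 ≤ i → i ≤ n → c i ≠ 0)
    (i0 : ℕ) (hi1 : 1 ≤ i0) (hin : i0 + 1 ≤ n) :
    ∀ j0 : ℕ, j0 + 1 ≤ i0 →
      ∑ l ∈ Finset.range (j0+1),
        (k (l+1) * ((-1:F) ^ ((i0+1) + (l+1)) * d l * g (i0+1) *
          (∏ ν ∈ Finset.Icc (l+2) i0, k ν * f ν) / ∏ ν ∈ Finset.Icc l (i0+1), c ν))
      = (-1:F) ^ i0 * g (i0+1) * k 1 * (a 1 - b 1) *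
          (∏ ν ∈ Finset.Icc 2 i0, k ν * f ν) / (∏ ν ∈ Finset.Icc 1 (i0+1), c ν)
        - (-1:F) ^ (i0 + j0 + 1) * g (i0+1) * k (j0+1) * b (j0+1) *
          (∏ ν ∈ Finset.Icc (j0+2) i0, k ν * f ν) / ∏ ν ∈ Finset.Icc (j0+1) (i0+1), c ν := by
  intro j0
  induction j0 with
  | zero =>
    intro _
    rw [Finset.sum_range_one, prodsplit c (Nat.zero_le (i0+1)), hc0, hd0]
    simp only [zero_add, add_zero]
    ring
  | succ m ih =>
    intro h
    have hm : m + 1 ≤ i0 := by omega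
    rw [Finset.sum_range_succ, ih hm]
    rw [show m+1+1 = m+2 by omega, show m+1+2 = m+3 by omega]
    rw [prodsplit (fun ν => k ν * f ν) (show m+2 ≤ i0 by omega)]
    rw [show m+2+1 = m+3 by omega]
    rw [prodsplit c (show m+1 ≤ i0+1 by omega)]
    rw [show m+1+1 = m+2 by omega]
    have key : d (m+1) = b (m+2) * c (m+1) + k (m+1) * b (m+1) * f (m+2) := by
      rw [hd (m+1) (by omega) (by omega), hf (m+2) (by omega) (by omega),
        hc (m+1) (by omega) (by omega)]
      ring
    have hcne1 : c (m+1) ≠ 0 := hcne (m+1) (by omega) (by omega)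
    have hQ : (∏ ν ∈ Finset.Icc (m+2) (i0+1), c ν) ≠ 0 := Qne c hc0 hcne _ _ (by omega)
    have step : k (m+2) * ((-1:F) ^ ((i0+1) + (m+2)) * d (m+1) * g (i0+1) *
          (∏ ν ∈ Finset.Icc (m+3) i0, k ν * f ν) /
            (c (m+1) * ∏ ν ∈ Finset.Icc (m+2) (i0+1), c ν))
        = (-1:F) ^ (i0 + m + 1) * g (i0+1) * k (m+1) * b (m+1) *
            ((k (m+2) * f (m+2)) * ∏ ν ∈ Finset.Icc (m+3) i0, k ν * f ν) /
            (c (m+1) * ∏ ν ∈ Finset.Icc (m+2) (i0+1), c ν)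
          - (-1:F) ^ (i0 + (m+1) + 1) * g (i0+1) * k (m+2) * b (m+2) *
            (∏ ν ∈ Finset.Icc (m+3) i0, k ν * f ν) /
            ∏ ν ∈ Finset.Icc (m+2) (i0+1), c ν := by
      rw [mul_div_assoc', div_sub_div _ _ (mul_ne_zero hcne1 hQ) hQ,
        div_eq_div_iff (mul_ne_zero hcne1 hQ) (mul_ne_zero (mul_ne_zero hcne1 hQ) hQ)]
      linear_combination ((-1:F) ^ (i0+m+1) * g (i0+1) * k (m+2) *
        (∏ ν ∈ Finset.Icc (m+3) i0, k ν * f ν) * (∏ ν ∈ Finset.Icc (m+2) (i0+1), c ν) *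
        (c (m+1) * ∏ ν ∈ Finset.Icc (m+2) (i0+1), c ν)) * key
    rw [step]
    ring


lemma mainsum {F : Type*} [Field F] {n : ℕ} (hn : 3 ≤ n)
    (a b k c d f g : ℕ → F)
    (hc0 : c 0 = 1)
    (hc : ∀ i : ℕ, 1 ≤ i → i ≤ n - 1 → c i = k i * b i - k (i + 1) * a i)
    (hcn : c n = b n)
    (hd0 : d 0 = a 1)
    (hd : ∀ i : ℕ, 1 ≤ i → i ≤ n - 2 →
      d i = k i * a (i + 1) * b i - k (i + 1) * a i * b (i + 1))
    (hf : ∀ i : ℕ, 2 ≤ i → i ≤ n - 1 → f i = a i - b i)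
    (hg : ∀ i : ℕ, 2 ≤ i → i ≤ n - 1 → g i = k i - k (i + 1))
    (hgn : g n = 1)
    (hkn : k n ≠ 0)
    (hcne : ∀ i : ℕ, 1 ≤ i → i ≤ n → c i ≠ 0)
    (i0 j0 : ℕ) (hI : i0 < n) (hJ : j0 < n) :
    ∑ l ∈ Finset.range n,
      ((if l + 1 > i0 + 1 + 1 then (0:F)
          else if l + 1 = i0 + 1 + 1 then -1 / c (i0+1)
          else if i0 = l then
            (if i0 + 1 = 1 then 1 / c 1
             else if i0 + 1 = n then k (n-1) * b (n-1) / (k n * c (n-1) * c n)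
             else (k i0 * b i0 - k (i0+2) * a i0) / (c i0 * c (i0+1)))
          else (-1:F) ^ ((i0+1) + (l+1)) * d l * g (i0+1) *
            (∏ ν ∈ Finset.Icc (l+2) i0, k ν * f ν) / ∏ ν ∈ Finset.Icc l (i0+1), c ν)
         * (if l ≤ j0 then k (j0+1) * b (j0+1) else k (l+1) * a (j0+1)))
    = if i0 = j0 then (1:F) else 0 := by
  by_cases hi0 : i0 = 0
  · subst hi0
    have htr : ∑ l ∈ Finset.range n,
        ((if l + 1 > 0 + 1 + 1 then (0:F)
          else if l + 1 = 0 + 1 + 1 then -1 / c (0+1)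
          else if 0 = l then
            (if 0 + 1 = 1 then 1 / c 1
             else if 0 + 1 = n then k (n-1) * b (n-1) / (k n * c (n-1) * c n)
             else (k 0 * b 0 - k (0+2) * a 0) / (c 0 * c (0+1)))
          else (-1:F) ^ ((0+1) + (l+1)) * d l * g (0+1) *
            (∏ ν ∈ Finset.Icc (l+2) 0, k ν * f ν) / ∏ ν ∈ Finset.Icc l (0+1), c ν)
         * (if l ≤ j0 then k (j0+1) * b (j0+1) else k (l+1) * a (j0+1)))
        = ∑ l ∈ Finset.range 2,
        ((if l + 1 > 0 + 1 + 1 then (0:F)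
          else if l + 1 = 0 + 1 + 1 then -1 / c (0+1)
          else if 0 = l then
            (if 0 + 1 = 1 then 1 / c 1
             else if 0 + 1 = n then k (n-1) * b (n-1) / (k n * c (n-1) * c n)
             else (k 0 * b 0 - k (0+2) * a 0) / (c 0 * c (0+1)))
          else (-1:F) ^ ((0+1) + (l+1)) * d l * g (0+1) *
            (∏ ν ∈ Finset.Icc (l+2) 0, k ν * f ν) / ∏ ν ∈ Finset.Icc l (0+1), c ν)
         * (if l ≤ j0 then k (j0+1) * b (j0+1) else k (l+1) * a (j0+1))) := by
      refine (Finset.sum_subset (Finset.range_subset_range.mpr (by omega)) (fun x hx hnx => ?_)).symm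
      simp only [Finset.mem_range] at hx hnx
      rw [if_pos (show x+1 > 0+1+1 by omega), zero_mul]
    rw [htr, Finset.sum_range_succ, Finset.sum_range_one]
    rw [if_neg (show ¬(0+1 > 0+1+1) by omega), if_neg (show ¬(0+1 = 0+1+1) by omega),
      if_pos (rfl : (0:ℕ) = 0), if_pos (show 0+1 = 1 by omega),
      if_pos (show (0:ℕ) ≤ j0 by omega),
      if_neg (show ¬(1+1 > 0+1+1) by omega), if_pos (show 1+1 = 0+1+1 by omega)]
    by_cases hj : j0 = 0
    · subst hj
      rw [if_neg (show ¬(1:ℕ) ≤ 0 by omega), if_pos rfl]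
      have h1 := hc 1 (by omega) (by omega)
      have hne1 := hcne 1 (by omega) (by omega)
      -- ENDGAME 1
      have hne' : k 1 * b 1 - k (1+1) * a 1 ≠ 0 := by rw [← h1]; exact hne1
      rw [show (0:ℕ)+1 = 1 from rfl, h1]
      field_simp
      try ring
    · rw [if_pos (show (1:ℕ) ≤ j0 by omega), if_neg (show ¬(0:ℕ) = j0 by omega)]
      -- ENDGAME 2
      rw [show (0:ℕ)+1 = 1 from rfl]
      ring
  · have hi1 : 1 ≤ i0 := by omega
    have hT0 := sum1 a b k c d f g hc0 hc hd0 hd hf hcne i0 hi1 (by omega) (i0-1) (by omega)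
    rw [show i0-1+2 = i0+1 by omega, show i0-1+1 = i0 by omega,
      Finset.Icc_eq_empty (show ¬(i0+1 ≤ i0) by omega), Finset.prod_empty,
      prodsplit c (show i0 ≤ i0+1 by omega), Finset.Icc_self, Finset.prod_singleton,
      show ((-1:F))^(i0+(i0-1)) = -1 from Odd.neg_one_pow (by rw [Nat.odd_iff]; omega)] at hT0
    by_cases hlast : i0 + 1 = n
    · rw [show n = i0 + 1 from hlast.symm] at hcn hgn hkn ⊢
      rw [show i0+1-1 = i0 by omega]
      rw [Finset.sum_range_succ]
      rw [if_neg (show ¬(i0+1 > i0+1+1) by omega), if_neg (show ¬(i0+1 = i0+1+1) by omega),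
        if_pos (rfl : i0 = i0), if_neg (show ¬(i0+1 = 1) by omega), if_pos (rfl : i0+1 = i0+1)]
      by_cases hj : i0 = j0
      · subst hj
        rw [if_pos (show i0 ≤ i0 by omega), if_pos (rfl : i0 = i0)]
        have hA2 : ∑ l ∈ Finset.range i0,
            ((if l + 1 > i0 + 1 + 1 then (0:F)
          else if l + 1 = i0 + 1 + 1 then -1 / c (i0+1)
          else if i0 = l then k i0 * b i0 / (k (i0+1) * c i0 * c (i0+1))
          else (-1:F) ^ ((i0+1) + (l+1)) * d l * g (i0+1) *
            (∏ ν ∈ Finset.Icc (l+2) i0, k ν * f ν) / ∏ ν ∈ Finset.Icc l (i0+1), c ν)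
         * (if l ≤ i0 then k (i0+1) * b (i0+1) else k (l+1) * a (i0+1)))
            = (∑ l ∈ Finset.range i0, (-1:F) ^ ((i0+1) + (l+1)) * d l * g (i0+1) *
                (∏ ν ∈ Finset.Icc (l+2) i0, k ν * f ν) / ∏ ν ∈ Finset.Icc l (i0+1), c ν)
              * (k (i0+1) * b (i0+1)) := by
          rw [Finset.sum_mul]
          refine Finset.sum_congr rfl (fun l hl => ?_)
          simp only [Finset.mem_range] at hl
          rw [if_neg (by omega), if_neg (by omega), if_neg (by omega), if_pos (by omega)]
        rw [hA2, hT0]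
        have hcv := hc i0 (by omega) (by omega)
        have hne0 := hcne i0 (by omega) (by omega)
        have hne1 : c (i0+1) ≠ 0 := hcne (i0+1) (by omega) (by omega)
        -- ENDGAME 3
        have hb1 : b (i0+1) ≠ 0 := by rw [← hcn]; exact hne1
        have hne0' : k i0 * b i0 - k (i0+1) * a i0 ≠ 0 := by rw [← hcv]; exact hne0
        rw [hgn, hcv, hcn]
        field_simp [hkn, hb1, hne0']
        try ring
        have h2 : -(a i0 * k (1 + i0)) + k i0 * b i0 ≠ 0 := by
          rw [add_comm 1 i0, mul_comm (a i0)]; intro h; exact hne0' (by linear_combination h)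
        linear_combination mul_inv_cancel₀ h2
      · have hjlt : j0 < i0 := by omega
        rw [if_neg hj, if_neg (show ¬(i0 ≤ j0) by omega)]
        have hS1 := sum1 a b k c d f g hc0 hc hd0 hd hf hcne i0 hi1 (by omega) j0 (by omega)
        have hF1 := sum2 a b k c d f g hc0 hc hd0 hd hf hcne i0 hi1 (by omega) j0 (by omega)
        have hF2 := sum2 a b k c d f g hc0 hc hd0 hd hf hcne i0 hi1 (by omega) (i0-1) (by omega)
        rw [show i0-1+2 = i0+1 by omega, show i0-1+1 = i0 by omega,
          Finset.Icc_eq_empty (show ¬(i0+1 ≤ i0) by omega), Finset.prod_empty,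
          prodsplit c (show i0 ≤ i0+1 by omega), Finset.Icc_self, Finset.prod_singleton,
          show ((-1:F))^(i0+(i0-1)+1) = 1 from Even.neg_one_pow (by rw [Nat.even_iff]; omega)] at hF2
        have hsplit : ∑ l ∈ Finset.range i0,
            ((if l + 1 > i0 + 1 + 1 then (0:F)
          else if l + 1 = i0 + 1 + 1 then -1 / c (i0+1)
          else if i0 = l then k i0 * b i0 / (k (i0+1) * c i0 * c (i0+1))
          else (-1:F) ^ ((i0+1) + (l+1)) * d l * g (i0+1) *
            (∏ ν ∈ Finset.Icc (l+2) i0, k ν * f ν) / ∏ ν ∈ Finset.Icc l (i0+1), c ν)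
         * (if l ≤ j0 then k (j0+1) * b (j0+1) else k (l+1) * a (j0+1)))
            = (∑ l ∈ Finset.range (j0+1), (-1:F) ^ ((i0+1) + (l+1)) * d l * g (i0+1) *
                (∏ ν ∈ Finset.Icc (l+2) i0, k ν * f ν) / ∏ ν ∈ Finset.Icc l (i0+1), c ν)
              * (k (j0+1) * b (j0+1))
            + ((∑ l ∈ Finset.range i0, k (l+1) * ((-1:F) ^ ((i0+1) + (l+1)) * d l * g (i0+1) *
                (∏ ν ∈ Finset.Icc (l+2) i0, k ν * f ν) / ∏ ν ∈ Finset.Icc l (i0+1), c ν))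
              - ∑ l ∈ Finset.range (j0+1), k (l+1) * ((-1:F) ^ ((i0+1) + (l+1)) * d l * g (i0+1) *
                (∏ ν ∈ Finset.Icc (l+2) i0, k ν * f ν) / ∏ ν ∈ Finset.Icc l (i0+1), c ν))
              * a (j0+1) := by
          rw [← Finset.sum_range_add_sum_Ico _ (show j0+1 ≤ i0 by omega)]
          congr 1
          · rw [Finset.sum_mul]
            refine Finset.sum_congr rfl (fun l hl => ?_)
            simp only [Finset.mem_range] at hl
            rw [if_neg (by omega), if_neg (by omega), if_neg (by omega), if_pos (by omega)]
          · rw [← Finset.sum_Ico_eq_sub _ (show j0+1 ≤ i0 by omega), Finset.sum_mul]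
            refine Finset.sum_congr rfl (fun l hl => ?_)
            simp only [Finset.mem_Ico] at hl
            rw [if_neg (by omega), if_neg (by omega), if_neg (by omega), if_neg (by omega)]
            ring
        rw [hsplit, hS1, hF1, hF2]
        have hcv := hc i0 (by omega) (by omega)
        have hne0 := hcne i0 (by omega) (by omega)
        have hne1 : c (i0+1) ≠ 0 := hcne (i0+1) (by omega) (by omega)
        -- ENDGAME 4
        have hhelp : k i0 * b i0 / (k (i0+1) * c i0 * c (i0+1)) * k (i0+1)
            = g (i0+1) * k i0 * b i0 / (c i0 * c (i0+1)) := by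
          rw [hgn]
          field_simp [hkn, hne0, hne1]
          try ring
        linear_combination (a (j0+1)) * hhelp
    · have htr : ∑ l ∈ Finset.range n,
          ((if l + 1 > i0 + 1 + 1 then (0:F)
          else if l + 1 = i0 + 1 + 1 then -1 / c (i0+1)
          else if i0 = l then
            (if i0 + 1 = 1 then 1 / c 1
             else if i0 + 1 = n then k (n-1) * b (n-1) / (k n * c (n-1) * c n)
             else (k i0 * b i0 - k (i0+2) * a i0) / (c i0 * c (i0+1)))
          else (-1:F) ^ ((i0+1) + (l+1)) * d l * g (i0+1) *
            (∏ ν ∈ Finset.Icc (l+2) i0, k ν * f ν) / ∏ ν ∈ Finset.Icc l (i0+1), c ν)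
         * (if l ≤ j0 then k (j0+1) * b (j0+1) else k (l+1) * a (j0+1)))
          = ∑ l ∈ Finset.range (i0+2),
          ((if l + 1 > i0 + 1 + 1 then (0:F)
          else if l + 1 = i0 + 1 + 1 then -1 / c (i0+1)
          else if i0 = l then
            (if i0 + 1 = 1 then 1 / c 1
             else if i0 + 1 = n then k (n-1) * b (n-1) / (k n * c (n-1) * c n)
             else (k i0 * b i0 - k (i0+2) * a i0) / (c i0 * c (i0+1)))
          else (-1:F) ^ ((i0+1) + (l+1)) * d l * g (i0+1) *
            (∏ ν ∈ Finset.Icc (l+2) i0, k ν * f ν) / ∏ ν ∈ Finset.Icc l (i0+1), c ν)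
         * (if l ≤ j0 then k (j0+1) * b (j0+1) else k (l+1) * a (j0+1))) := by
        refine (Finset.sum_subset (Finset.range_subset_range.mpr (by omega)) (fun x hx hnx => ?_)).symm
        simp only [Finset.mem_range] at hx hnx
        rw [if_pos (show x+1 > i0+1+1 by omega), zero_mul]
      rw [htr, Finset.sum_range_succ, Finset.sum_range_succ]
      rw [if_neg (show ¬(i0+1+1 > i0+1+1) by omega), if_pos (rfl : i0+1+1 = i0+1+1),
        if_neg (show ¬(i0+1 > i0+1+1) by omega), if_neg (show ¬(i0+1 = i0+1+1) by omega),
        if_pos (rfl : i0 = i0), if_neg (show ¬(i0+1 = 1) by omega),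
        if_neg (show ¬(i0+1 = n) by omega)]
      have hgv := hg (i0+1) (by omega) (by omega)
      have hcv := hc i0 (by omega) (by omega)
      have hne0 := hcne i0 (by omega) (by omega)
      have hne1 : c (i0+1) ≠ 0 := hcne (i0+1) (by omega) (by omega)
      rcases Nat.lt_trichotomy i0 j0 with hj | hj | hj
      · rw [if_neg (show ¬(i0 = j0) by omega), if_pos (show i0 ≤ j0 by omega),
          if_pos (show i0+1 ≤ j0 by omega)]
        have hA2 : ∑ l ∈ Finset.range i0,
            ((if l + 1 > i0 + 1 + 1 then (0:F)
          else if l + 1 = i0 + 1 + 1 then -1 / c (i0+1)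
          else if i0 = l then (k i0 * b i0 - k (i0+2) * a i0) / (c i0 * c (i0+1))
          else (-1:F) ^ ((i0+1) + (l+1)) * d l * g (i0+1) *
            (∏ ν ∈ Finset.Icc (l+2) i0, k ν * f ν) / ∏ ν ∈ Finset.Icc l (i0+1), c ν)
         * (if l ≤ j0 then k (j0+1) * b (j0+1) else k (l+1) * a (j0+1)))
            = (∑ l ∈ Finset.range i0, (-1:F) ^ ((i0+1) + (l+1)) * d l * g (i0+1) *
                (∏ ν ∈ Finset.Icc (l+2) i0, k ν * f ν) / ∏ ν ∈ Finset.Icc l (i0+1), c ν)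
              * (k (j0+1) * b (j0+1)) := by
          rw [Finset.sum_mul]
          refine Finset.sum_congr rfl (fun l hl => ?_)
          simp only [Finset.mem_range] at hl
          rw [if_neg (by omega), if_neg (by omega), if_neg (by omega), if_pos (by omega)]
        rw [hA2, hT0]
        -- ENDGAME 5
        have hne0' : k i0 * b i0 - k (i0+1) * a i0 ≠ 0 := by rw [← hcv]; exact hne0
        rw [show i0+1+1 = i0+2 by omega] at hgv
        rw [hgv, hcv]
        field_simp [hne1, hne0']
        try ring
      · subst hj
        rw [if_pos (rfl : i0 = i0), if_pos (show i0 ≤ i0 by omega), if_neg (show ¬(i0+1 ≤ i0) by omega)]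
        have hA2 : ∑ l ∈ Finset.range i0,
            ((if l + 1 > i0 + 1 + 1 then (0:F)
          else if l + 1 = i0 + 1 + 1 then -1 / c (i0+1)
          else if i0 = l then (k i0 * b i0 - k (i0+2) * a i0) / (c i0 * c (i0+1))
          else (-1:F) ^ ((i0+1) + (l+1)) * d l * g (i0+1) *
            (∏ ν ∈ Finset.Icc (l+2) i0, k ν * f ν) / ∏ ν ∈ Finset.Icc l (i0+1), c ν)
         * (if l ≤ i0 then k (i0+1) * b (i0+1) else k (l+1) * a (i0+1)))
            = (∑ l ∈ Finset.range i0, (-1:F) ^ ((i0+1) + (l+1)) * d l * g (i0+1) *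
                (∏ ν ∈ Finset.Icc (l+2) i0, k ν * f ν) / ∏ ν ∈ Finset.Icc l (i0+1), c ν)
              * (k (i0+1) * b (i0+1)) := by
          rw [Finset.sum_mul]
          refine Finset.sum_congr rfl (fun l hl => ?_)
          simp only [Finset.mem_range] at hl
          rw [if_neg (by omega), if_neg (by omega), if_neg (by omega), if_pos (by omega)]
        rw [hA2, hT0]
        have hcv1 := hc (i0+1) (by omega) (by omega)
        -- ENDGAME 6
        have hne0' : k i0 * b i0 - k (i0+1) * a i0 ≠ 0 := by rw [← hcv]; exact hne0
        rw [show i0+1+1 = i0+2 by omega] at hgv hcv1 ⊢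
        have hne1' : k (i0+1) * b (i0+1) - k (i0+2) * a (i0+1) ≠ 0 := by rw [← hcv1]; exact hne1
        rw [hgv, hcv, hcv1]
        field_simp [hne0', hne1']
        try ring
      · rw [if_neg (show ¬(i0 = j0) by omega), if_neg (show ¬(i0 ≤ j0) by omega),
          if_neg (show ¬(i0+1 ≤ j0) by omega)]
        have hS1 := sum1 a b k c d f g hc0 hc hd0 hd hf hcne i0 hi1 (by omega) j0 (by omega)
        have hF1 := sum2 a b k c d f g hc0 hc hd0 hd hf hcne i0 hi1 (by omega) j0 (by omega)
        have hF2 := sum2 a b k c d f g hc0 hc hd0 hd hf hcne i0 hi1 (by omega) (i0-1) (by omega)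
        rw [show i0-1+2 = i0+1 by omega, show i0-1+1 = i0 by omega,
          Finset.Icc_eq_empty (show ¬(i0+1 ≤ i0) by omega), Finset.prod_empty,
          prodsplit c (show i0 ≤ i0+1 by omega), Finset.Icc_self, Finset.prod_singleton,
          show ((-1:F))^(i0+(i0-1)+1) = 1 from Even.neg_one_pow (by rw [Nat.even_iff]; omega)] at hF2
        have hsplit : ∑ l ∈ Finset.range i0,
            ((if l + 1 > i0 + 1 + 1 then (0:F)
          else if l + 1 = i0 + 1 + 1 then -1 / c (i0+1)
          else if i0 = l then (k i0 * b i0 - k (i0+2) * a i0) / (c i0 * c (i0+1))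
          else (-1:F) ^ ((i0+1) + (l+1)) * d l * g (i0+1) *
            (∏ ν ∈ Finset.Icc (l+2) i0, k ν * f ν) / ∏ ν ∈ Finset.Icc l (i0+1), c ν)
         * (if l ≤ j0 then k (j0+1) * b (j0+1) else k (l+1) * a (j0+1)))
            = (∑ l ∈ Finset.range (j0+1), (-1:F) ^ ((i0+1) + (l+1)) * d l * g (i0+1) *
                (∏ ν ∈ Finset.Icc (l+2) i0, k ν * f ν) / ∏ ν ∈ Finset.Icc l (i0+1), c ν)
              * (k (j0+1) * b (j0+1))
            + ((∑ l ∈ Finset.range i0, k (l+1) * ((-1:F) ^ ((i0+1) + (l+1)) * d l * g (i0+1) *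
                (∏ ν ∈ Finset.Icc (l+2) i0, k ν * f ν) / ∏ ν ∈ Finset.Icc l (i0+1), c ν))
              - ∑ l ∈ Finset.range (j0+1), k (l+1) * ((-1:F) ^ ((i0+1) + (l+1)) * d l * g (i0+1) *
                (∏ ν ∈ Finset.Icc (l+2) i0, k ν * f ν) / ∏ ν ∈ Finset.Icc l (i0+1), c ν))
              * a (j0+1) := by
          rw [← Finset.sum_range_add_sum_Ico _ (show j0+1 ≤ i0 by omega)]
          congr 1
          · rw [Finset.sum_mul]
            refine Finset.sum_congr rfl (fun l hl => ?_)
            simp only [Finset.mem_range] at hl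
            rw [if_neg (by omega), if_neg (by omega), if_neg (by omega), if_pos (by omega)]
          · rw [← Finset.sum_Ico_eq_sub _ (show j0+1 ≤ i0 by omega), Finset.sum_mul]
            refine Finset.sum_congr rfl (fun l hl => ?_)
            simp only [Finset.mem_Ico] at hl
            rw [if_neg (by omega), if_neg (by omega), if_neg (by omega), if_neg (by omega)]
            ring
        rw [hsplit, hS1, hF1, hF2]
        -- ENDGAME 7
        have hne0' : k i0 * b i0 - k (i0+1) * a i0 ≠ 0 := by rw [← hcv]; exact hne0
        rw [show i0+1+1 = i0+2 by omega] at hgv ⊢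
        have hhelp : (k i0 * b i0 - k (i0+2) * a i0) / (c i0 * c (i0+1)) * k (i0+1)
            + -1 / c (i0+1) * k (i0+2)
            = g (i0+1) * k i0 * b i0 / (c i0 * c (i0+1)) := by
          rw [hgv, hcv]
          field_simp [hne0', hne1]
          try ring
          have h2 : k i0 * b i0 - a i0 * k (1 + i0) ≠ 0 := by
            rw [add_comm 1 i0, mul_comm (a i0)]; exact hne0'
          linear_combination k (2 + i0) * mul_inv_cancel₀ h2
        linear_combination (a (j0+1)) * hhelp




/-- With `A₂` the Brownian-type matrix `(A₂)_{ij} = kⱼbⱼ (i ≤ j)`,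
`kᵢaⱼ (i > j)` (1-based), and `B` the lower Hessenberg matrix of formulae (8),
assuming `kₙ ≠ 0` and `cᵢ ≠ 0` for `i = 1,…,n`, we have `B * A₂ = 1`. -/
theorem stmt_11 {F : Type*} [Field F] {n : ℕ} (hn : 3 ≤ n)
    (a b k c d f g : ℕ → F)
    (A₂ B : Matrix (Fin n) (Fin n) F)
    (hA : ∀ i j : Fin n, A₂ i j =
      if (i : ℕ) ≤ (j : ℕ) then k ((j : ℕ) + 1) * b ((j : ℕ) + 1)
      else k ((i : ℕ) + 1) * a ((j : ℕ) + 1))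
    (hc0 : c 0 = 1)
    (hc : ∀ i : ℕ, 1 ≤ i → i ≤ n - 1 → c i = k i * b i - k (i + 1) * a i)
    (hcn : c n = b n)
    (hd0 : d 0 = a 1)
    (hd : ∀ i : ℕ, 1 ≤ i → i ≤ n - 2 →
      d i = k i * a (i + 1) * b i - k (i + 1) * a i * b (i + 1))
    (hf : ∀ i : ℕ, 2 ≤ i → i ≤ n - 1 → f i = a i - b i)
    (hg : ∀ i : ℕ, 2 ≤ i → i ≤ n - 1 → g i = k i - k (i + 1))
    (hgn : g n = 1)
    (hB : ∀ i j : Fin n, B i j =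
      if ((j : ℕ) + 1) > ((i : ℕ) + 1) + 1 then 0
      else if ((j : ℕ) + 1) = ((i : ℕ) + 1) + 1 then -1 / c ((i : ℕ) + 1)
      else if (i : ℕ) = (j : ℕ) then
        (if (i : ℕ) + 1 = 1 then 1 / c 1
         else if (i : ℕ) + 1 = n then k (n - 1) * b (n - 1) / (k n * c (n - 1) * c n)
         else (k (i : ℕ) * b (i : ℕ) - k ((i : ℕ) + 2) * a (i : ℕ)) /
           (c (i : ℕ) * c ((i : ℕ) + 1)))
      else (-1 : F) ^ (((i : ℕ) + 1) + ((j : ℕ) + 1)) * d (j : ℕ) * g ((i : ℕ) + 1) *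
        (∏ ν ∈ Finset.Icc ((j : ℕ) + 2) (i : ℕ), k ν * f ν) /
        ∏ ν ∈ Finset.Icc (j : ℕ) ((i : ℕ) + 1), c ν)
    (hkn : k n ≠ 0)
    (hcne : ∀ i : ℕ, 1 ≤ i → i ≤ n → c i ≠ 0) :
    B * A₂ = 1 := by
  ext I J
  rw [Matrix.mul_apply, Matrix.one_apply]
  have e1 : ∑ l : Fin n, B I l * A₂ l J
      = ∑ l ∈ Finset.range n,
      ((if l + 1 > (I:ℕ) + 1 + 1 then (0:F)
          else if l + 1 = (I:ℕ) + 1 + 1 then -1 / c ((I:ℕ)+1)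
          else if (I:ℕ) = l then
            (if (I:ℕ) + 1 = 1 then 1 / c 1
             else if (I:ℕ) + 1 = n then k (n-1) * b (n-1) / (k n * c (n-1) * c n)
             else (k (I:ℕ) * b (I:ℕ) - k ((I:ℕ)+2) * a (I:ℕ)) / (c (I:ℕ) * c ((I:ℕ)+1)))
          else (-1:F) ^ (((I:ℕ)+1) + (l+1)) * d l * g ((I:ℕ)+1) *
            (∏ ν ∈ Finset.Icc (l+2) (I:ℕ), k ν * f ν) / ∏ ν ∈ Finset.Icc l ((I:ℕ)+1), c ν)
         * (if l ≤ (J:ℕ) then k ((J:ℕ)+1) * b ((J:ℕ)+1) else k (l+1) * a ((J:ℕ)+1))) := by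
    rw [← Fin.sum_univ_eq_sum_range]
    refine Finset.sum_congr rfl (fun l _ => ?_)
    rw [hB, hA]
  rw [e1, mainsum hn a b k c d f g hc0 hc hcn hd0 hd hf hg hgn hkn hcne
    (I:ℕ) (J:ℕ) I.isLt J.isLt]
  simp [Fin.ext_iff]
end

section
/- The determinant of A_2 equals k_n · b_n · ∏_{i=1}^{n−1} (k_i b_i − k_{i+1} a_i). -/
/-- `det A₂ = kₙ bₙ ∏_{i=1}^{n-1} (kᵢ bᵢ - k_{i+1} aᵢ)`. -/
theorem stmt_12 {F : Type*} [Field F] {n : ℕ} (hn : 2 ≤ n)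
    (a b k : ℕ → F)
    (A₂ : Matrix (Fin n) (Fin n) F)
    (hA : ∀ i j : Fin n, A₂ i j =
      if (i : ℕ) ≤ (j : ℕ) then k ((j : ℕ) + 1) * b ((j : ℕ) + 1)
      else k ((i : ℕ) + 1) * a ((j : ℕ) + 1)) :
    A₂.det = k n * b n * ∏ i ∈ Finset.Icc 1 (n - 1), (k i * b i - k (i + 1) * a i) := by
  obtain ⟨m, rfl⟩ : ∃ m, n = m + 1 := ⟨n - 1, by omega⟩
  -- elimination matrix: row i ← row i - row (i+1)
  set E : Matrix (Fin (m + 1)) (Fin (m + 1)) F := fun i j =>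
    if j = i then 1 else if (j : ℕ) = (i : ℕ) + 1 then -1 else 0 with hE
  have hEut : E.BlockTriangular id := by
    intro i j hij
    simp only [id] at hij
    have h1 : ¬ (j = i) := by intro h; exact absurd h (by exact fun h => (lt_irrefl i (h ▸ hij)))
    have h2 : ¬ ((j : ℕ) = (i : ℕ) + 1) := by
      have := Fin.lt_iff_val_lt_val.mp hij
      omega
    simp [hE, h1, h2]
  have hEdet : E.det = 1 := by
    rw [Matrix.det_of_upperTriangular hEut]
    simp [hE]
  -- compute entries of E * A₂
  have hmul : ∀ i j : Fin (m + 1), (E * A₂) i j =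
      A₂ i j + (if h : (i : ℕ) + 1 < m + 1 then -A₂ ⟨(i : ℕ) + 1, h⟩ j else 0) := by
    intro i j
    rw [Matrix.mul_apply]
    have : ∀ x : Fin (m + 1), E i x * A₂ x j =
        (if x = i then A₂ x j else 0) +
        (if (x : ℕ) = (i : ℕ) + 1 then -A₂ x j else 0) := by
      intro x
      by_cases h1 : x = i
      · have h2 : ¬ ((x : ℕ) = (i : ℕ) + 1) := by subst h1; omega
        simp [hE, h1, h2]
      · by_cases h2 : (x : ℕ) = (i : ℕ) + 1
        · simp [hE, h1, h2]
        · simp [hE, h1, h2]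
    rw [Finset.sum_congr rfl (fun x _ => this x), Finset.sum_add_distrib]
    congr 1
    · simp
    · by_cases h : (i : ℕ) + 1 < m + 1
      · rw [dif_pos h]
        rw [Finset.sum_eq_single (⟨(i : ℕ) + 1, h⟩ : Fin (m + 1))]
        · simp
        · intro x _ hx
          have : ¬ ((x : ℕ) = (i : ℕ) + 1) := by
            intro hc; exact hx (Fin.ext hc)
          simp [this]
        · simp
      · rw [dif_neg h]
        apply Finset.sum_eq_zero
        intro x _
        have : ¬ ((x : ℕ) = (i : ℕ) + 1) := by omega
        simp [this]
  -- E * A₂ is lower triangular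
  have hlt : (E * A₂).BlockTriangular OrderDual.toDual := by
    intro i j hij
    have hij' : (i : ℕ) < (j : ℕ) := hij
    rw [hmul]
    have h : (i : ℕ) + 1 < m + 1 := by omega
    rw [dif_pos h, hA, hA]
    have h1 : (i : ℕ) ≤ (j : ℕ) := le_of_lt hij'
    have h2 : ((⟨(i : ℕ) + 1, h⟩ : Fin (m + 1)) : ℕ) ≤ (j : ℕ) := by simp; omega
    rw [if_pos h1, if_pos h2]
    ring
  have hdet : A₂.det = ∏ i : Fin (m + 1), (E * A₂) i i := by
    rw [← Matrix.det_of_lowerTriangular _ hlt, Matrix.det_mul, hEdet, one_mul]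
  rw [hdet]
  -- compute diagonal entries and finish
  rw [Fin.prod_univ_castSucc]
  have hlast : (E * A₂) (Fin.last m) (Fin.last m) = k (m + 1) * b (m + 1) := by
    rw [hmul]
    have h : ¬ ((Fin.last m : ℕ) + 1 < m + 1) := by simp
    rw [dif_neg h, hA]
    simp
  have hdiag : ∀ i : Fin m, (E * A₂) i.castSucc i.castSucc =
      k ((i : ℕ) + 1) * b ((i : ℕ) + 1) - k ((i : ℕ) + 2) * a ((i : ℕ) + 1) := by
    intro i
    rw [hmul]
    have h : ((i.castSucc : Fin (m + 1)) : ℕ) + 1 < m + 1 := by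
      simp only [Fin.coe_castSucc]; omega
    rw [dif_pos h, hA, hA]
    have h1 : ((i.castSucc : Fin (m + 1)) : ℕ) ≤ ((i.castSucc : Fin (m + 1)) : ℕ) := le_refl _
    have h2 : ¬ (((⟨((i.castSucc : Fin (m + 1)) : ℕ) + 1, h⟩ : Fin (m + 1)) : ℕ) ≤
        ((i.castSucc : Fin (m + 1)) : ℕ)) := by simp
    rw [if_pos h1, if_neg h2]
    simp [Fin.castSucc]
    ring
  rw [hlast, Finset.prod_congr rfl (fun i _ => hdiag i)]
  rw [Fin.prod_univ_eq_prod_range (fun i => k (i + 1) * b (i + 1) - k (i + 2) * a (i + 1)) m]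
  have : Finset.Icc 1 (m + 1 - 1) = Finset.Ico 1 (m + 1) := by
    simp [Nat.Icc_eq_range', Finset.Ico]
    rfl
  rw [this, Finset.prod_Ico_eq_prod_range]
  simp only [Nat.add_sub_cancel]
  rw [mul_comm]
  congr 1
  apply Finset.prod_congr rfl
  intro i _
  have h1 : 1 + i = i + 1 := Nat.add_comm 1 i
  have h2 : i + 1 + 1 = i + 2 := rfl
  rw [h1, h2]
end

section
/- The matrix A_2 is invertible if and only if k_n ≠ 0, b_n ≠ 0, and k_i b_i − k_{i+1} a_i ≠ 0 for every i with 1 ≤ i ≤ n−1. -/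
/-- `A₂` is invertible iff `kₙ ≠ 0`, `bₙ ≠ 0`, and
`kᵢ bᵢ - k_{i+1} aᵢ ≠ 0` for `1 ≤ i ≤ n-1`. -/
theorem stmt_13 {F : Type*} [Field F] {n : ℕ} (hn : 2 ≤ n)
    (a b k : ℕ → F)
    (A₂ : Matrix (Fin n) (Fin n) F)
    (hA : ∀ i j : Fin n, A₂ i j =
      if (i : ℕ) ≤ (j : ℕ) then k ((j : ℕ) + 1) * b ((j : ℕ) + 1)
      else k ((i : ℕ) + 1) * a ((j : ℕ) + 1)) :
    IsUnit A₂ ↔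
      (k n ≠ 0 ∧ b n ≠ 0 ∧ ∀ i : ℕ, 1 ≤ i → i ≤ n - 1 → k i * b i - k (i + 1) * a i ≠ 0) := by
  classical
  -- elimination matrix E : row i ↦ row i − row (i+1)
  set E : Matrix (Fin n) (Fin n) F :=
    fun i j => (if i = j then (1:F) else 0) - (if (j:ℕ) = (i:ℕ) + 1 then 1 else 0) with hE
  have hEA : ∀ i j : Fin n, (E * A₂) i j =
      A₂ i j - (if h : (i:ℕ)+1 < n then A₂ ⟨(i:ℕ)+1, h⟩ j else 0) := by
    intro i j
    rw [Matrix.mul_apply]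
    simp only [hE, sub_mul, one_mul, zero_mul, Finset.sum_sub_distrib, ite_mul]
    congr 1
    · simp [Finset.sum_ite_eq]
    · by_cases h : (i:ℕ)+1 < n
      · rw [dif_pos h, Finset.sum_eq_single (⟨(i:ℕ)+1, h⟩ : Fin n)]
        · simp
        · intro c _ hc
          have : (c:ℕ) ≠ (i:ℕ)+1 := fun hcc => hc (Fin.ext hcc)
          simp [this]
        · simp
      · rw [dif_neg h]
        apply Finset.sum_eq_zero
        intro c _
        have : (c:ℕ) ≠ (i:ℕ)+1 := fun hcc => (h (hcc ▸ c.isLt)).elim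
        simp [this]
  -- E is upper triangular with unit diagonal
  have hdetE : E.det = 1 := by
    rw [Matrix.det_of_upperTriangular]
    · apply Finset.prod_eq_one
      intro i _
      simp [hE]
    · intro i j hij
      have hji : (j:ℕ) < (i:ℕ) := hij
      have h1 : i ≠ j := fun h => by omega
      have h2 : (j:ℕ) ≠ (i:ℕ)+1 := by omega
      simp [hE, h1, h2]
  -- diagonal entries of E * A₂
  have hdiag : ∀ i : Fin n, (E * A₂) i i =
      if (i:ℕ)+1 < n then k ((i:ℕ)+1) * b ((i:ℕ)+1) - k ((i:ℕ)+2) * a ((i:ℕ)+1)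
      else k n * b n := by
    intro i
    rw [hEA]
    by_cases h : (i:ℕ)+1 < n
    · rw [dif_pos h, if_pos h, hA, hA]
      have h1 : ¬ ((i:ℕ)+1 ≤ (i:ℕ)) := by omega
      rw [if_pos (le_refl _), if_neg h1]
    · rw [dif_neg h, if_neg h, hA, if_pos (le_refl _)]
      have : (i:ℕ)+1 = n := by omega
      rw [this, sub_zero]
  -- E * A₂ is lower triangular
  have hlow : (E * A₂).BlockTriangular OrderDual.toDual := by
    intro i j hij
    have hij' : (i:ℕ) < (j:ℕ) := hij
    have h : (i:ℕ)+1 < n := lt_of_le_of_lt hij' j.isLt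
    rw [hEA, dif_pos h, hA, hA, if_pos (le_of_lt hij'), if_pos (show (i:ℕ)+1 ≤ (j:ℕ) from hij'), sub_self]
  -- determinant computation
  have hdet : A₂.det = ∏ i : Fin n, (E * A₂) i i := by
    rw [← Matrix.det_of_lowerTriangular _ hlow, Matrix.det_mul, hdetE, one_mul]
  rw [Matrix.isUnit_iff_isUnit_det, isUnit_iff_ne_zero, hdet, Finset.prod_ne_zero_iff]
  constructor
  · intro H
    have hlast := H ⟨n-1, by omega⟩ (Finset.mem_univ _)
    rw [hdiag] at hlast
    simp only [show ¬ ((n-1)+1 < n) by omega, if_neg, if_false] at hlast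
    have hkb := mul_ne_zero_iff.mp hlast
    refine ⟨hkb.1, hkb.2, fun i h1 h2 => ?_⟩
    have hi : i - 1 < n := by omega
    have hm := H ⟨i-1, hi⟩ (Finset.mem_univ _)
    rw [hdiag] at hm
    have h3 : (i-1)+1 < n := by omega
    rw [if_pos h3] at hm
    have h4 : (i-1)+1 = i := by omega
    rw [h4] at hm
    have h5 : (i-1)+2 = i+1 := by omega
    rwa [h5] at hm
  · rintro ⟨hk, hb, H⟩ i _
    rw [hdiag]
    by_cases h : (i:ℕ)+1 < n
    · rw [if_pos h]
      exact H ((i:ℕ)+1) (by omega) (by omega)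
    · rw [if_neg h]
      exact mul_ne_zero hk hb
end

section
/- Assume k_n ≠ 0, b_n ≠ 0, and k_i b_i − k_{i+1} a_i ≠ 0 for 1 ≤ i ≤ n−1, so that A_2 is invertible. Then the inverse A_2^{−1} is a lower Hessenberg matrix: (A_2^{−1})_{ij} = 0 whenever j − i > 1. -/
/-- If `kₙ ≠ 0`, `bₙ ≠ 0`, and `kᵢ bᵢ - k_{i+1} aᵢ ≠ 0` for
`1 ≤ i ≤ n-1`, then `A₂⁻¹` is lower Hessenberg: `(A₂⁻¹)_{ij} = 0` for `j - i > 1`. -/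
theorem stmt_14 {F : Type*} [Field F] {n : ℕ} (hn : 2 ≤ n)
    (a b k : ℕ → F)
    (A₂ : Matrix (Fin n) (Fin n) F)
    (hA : ∀ i j : Fin n, A₂ i j =
      if (i : ℕ) ≤ (j : ℕ) then k ((j : ℕ) + 1) * b ((j : ℕ) + 1)
      else k ((i : ℕ) + 1) * a ((j : ℕ) + 1))
    (hkn : k n ≠ 0) (hbn : b n ≠ 0)
    (hc : ∀ i : ℕ, 1 ≤ i → i ≤ n - 1 → k i * b i - k (i + 1) * a i ≠ 0) :
    ∀ i j : Fin n, (j : ℕ) > (i : ℕ) + 1 → A₂⁻¹ i j = 0 := by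
  -- the difference matrix T (upper unitriangular)
  set T : Matrix (Fin n) (Fin n) F :=
    fun i j => (if i = j then (1 : F) else 0) - (if (i : ℕ) + 1 = (j : ℕ) then 1 else 0) with hT
  set M : Matrix (Fin n) (Fin n) F := T * A₂ with hM
  -- explicit entries of M
  have hMe : ∀ i j : Fin n, M i j =
      A₂ i j - (if h : (i : ℕ) + 1 < n then A₂ ⟨(i : ℕ) + 1, h⟩ j else 0) := by
    intro i j
    rw [hM, Matrix.mul_apply]
    have : ∀ l : Fin n, T i l * A₂ l j =
        (if i = l then A₂ l j else 0) - (if (i : ℕ) + 1 = (l : ℕ) then A₂ l j else 0) := by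
      intro l
      rw [hT]
      by_cases h1 : i = l <;> by_cases h2 : (i : ℕ) + 1 = (l : ℕ) <;>
        simp [h1, h2]
    rw [Finset.sum_congr rfl fun l _ => this l, Finset.sum_sub_distrib,
      Finset.sum_ite_eq Finset.univ i (fun l => A₂ l j)]
    simp only [Finset.mem_univ, if_true]
    congr 1
    by_cases h : (i : ℕ) + 1 < n
    · rw [dif_pos h, Finset.sum_eq_single (⟨(i : ℕ) + 1, h⟩ : Fin n)]
      · simp
      · intro l _ hl
        rw [if_neg]
        intro he
        exact hl (Fin.ext he.symm)
      · simp
    · rw [dif_neg h, Finset.sum_eq_zero]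
      intro l _
      rw [if_neg]
      intro he
      exact h (he ▸ l.isLt)
  -- M is lower triangular
  have hMtri : M.BlockTriangular OrderDual.toDual := by
    intro i j hij
    have hij' : (i : ℕ) < (j : ℕ) := hij
    have h : (i : ℕ) + 1 < n := lt_of_le_of_lt hij' j.isLt
    rw [hMe, dif_pos h, hA, hA]
    simp only
    rw [if_pos (le_of_lt hij'), if_pos (by omega : (i : ℕ) + 1 ≤ (j : ℕ))]
    ring
  -- diagonal of M is nonzero
  have hMdiag : ∀ i : Fin n, M i i ≠ 0 := by
    intro i
    rw [hMe, hA]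
    simp only [le_refl, if_true]
    by_cases h : (i : ℕ) + 1 < n
    · rw [dif_pos h, hA]
      simp only
      rw [if_neg (by omega)]
      exact hc ((i : ℕ) + 1) (by omega) (by omega)
    · rw [dif_neg h, sub_zero]
      have : (i : ℕ) + 1 = n := by have := i.isLt; omega
      rw [this]
      exact mul_ne_zero hkn hbn
  -- determinants
  have hTtri : T.BlockTriangular id := by
    intro i j hij
    have hij' : (j : ℕ) < (i : ℕ) := hij
    rw [hT]
    simp only
    rw [if_neg (by exact fun h => by simp [h] at hij'), if_neg (by omega)]
    ring
  have hTdet : T.det = 1 := by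
    rw [Matrix.det_of_upperTriangular hTtri]
    have : ∀ i : Fin n, T i i = 1 := by
      intro i
      rw [hT]; simp
    simp [this]
  have hMdet : M.det ≠ 0 := by
    rw [Matrix.det_of_lowerTriangular M hMtri]
    exact Finset.prod_ne_zero_iff.mpr fun i _ => hMdiag i
  have hTunit : IsUnit T.det := by rw [hTdet]; exact isUnit_one
  have hMunit : IsUnit M.det := isUnit_iff_ne_zero.mpr hMdet
  haveI : Invertible M := M.invertibleOfIsUnitDet hMunit
  -- M⁻¹ is lower triangular
  have hMinv : M⁻¹.BlockTriangular OrderDual.toDual :=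
    Matrix.blockTriangular_inv_of_blockTriangular hMtri
  -- A₂⁻¹ = M⁻¹ * T
  have hAinv : A₂⁻¹ = M⁻¹ * T := by
    rw [hM, Matrix.mul_inv_rev, Matrix.mul_assoc, Matrix.nonsing_inv_mul T hTunit,
      Matrix.mul_one]
  intro i j hij
  rw [hAinv, Matrix.mul_apply]
  apply Finset.sum_eq_zero
  intro l _
  rcases le_or_gt (l : ℕ) (i : ℕ) with h | h
  · rw [hT]
    simp only
    rw [if_neg (fun he => by simp [he] at h; omega), if_neg (by omega)]
    ring
  · rw [hMinv (show OrderDual.toDual l < OrderDual.toDual i from h), zero_mul]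
end

section
/- Let E be the n×n upper bidiagonal matrix with E_{ii} = 1 for all i, E_{i,i+1} = −1 for 1 ≤ i ≤ n−1, and all other entries 0. Then E · A_2 is the lower triangular matrix T with: T_{ii} = k_i b_i − k_{i+1} a_i for 1 ≤ i ≤ n−1, T_{nn} = k_n b_n, T_{ij} = a_j (k_i − k_{i+1}) for 1 ≤ j < i ≤ n−1, T_{nj} = k_n a_j for 1 ≤ j ≤ n−1, and T_{ij} = 0 for j > i. -/
/-- The upper bidiagonal matrix `E` (diagonal 1's, superdiagonal
`-1`'s) satisfies `E * A₂ = T`, where `T` is the stated lower triangular matrix. -/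
theorem stmt_15 {F : Type*} [Field F] {n : ℕ} (hn : 2 ≤ n)
    (a b k : ℕ → F)
    (A₂ E T : Matrix (Fin n) (Fin n) F)
    (hA : ∀ i j : Fin n, A₂ i j =
      if (i : ℕ) ≤ (j : ℕ) then k ((j : ℕ) + 1) * b ((j : ℕ) + 1)
      else k ((i : ℕ) + 1) * a ((j : ℕ) + 1))
    (hE : ∀ i j : Fin n, E i j =
      if i = j then 1
      else if (j : ℕ) = (i : ℕ) + 1 then -1
      else 0)
    (hT : ∀ i j : Fin n, T i j =
      if (i : ℕ) < (j : ℕ) then 0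
      else if i = j then
        (if (i : ℕ) + 1 = n then k n * b n
         else k ((i : ℕ) + 1) * b ((i : ℕ) + 1) - k ((i : ℕ) + 2) * a ((i : ℕ) + 1))
      else
        (if (i : ℕ) + 1 = n then k n * a ((j : ℕ) + 1)
         else a ((j : ℕ) + 1) * (k ((i : ℕ) + 1) - k ((i : ℕ) + 2)))) :
    E * A₂ = T := by
  ext i j
  rw [Matrix.mul_apply]
  have hsum : ∀ l : Fin n, E i l * A₂ l j =
      (if l = i then A₂ l j else 0) - (if (l : ℕ) = (i : ℕ) + 1 then A₂ l j else 0) := by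
    intro l
    rw [hE]
    rcases eq_or_ne l i with rfl | hne
    · have : ¬ ((l : ℕ) = (l : ℕ) + 1) := by omega
      simp [this]
    · rcases eq_or_ne ((l : ℕ)) ((i : ℕ) + 1) with h1 | h1
      · have : i ≠ l := fun h => hne h.symm
        simp [this, h1, hne]
      · have : i ≠ l := fun h => hne h.symm
        simp [this, h1, hne]
  rw [Finset.sum_congr rfl (fun l _ => hsum l), Finset.sum_sub_distrib,
    Finset.sum_ite_eq' Finset.univ i (fun l => A₂ l j)]
  simp only [Finset.mem_univ, if_true]
  by_cases hin : (i : ℕ) + 1 < n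
  · have h2 : (Finset.univ.sum fun l : Fin n => if (l : ℕ) = (i : ℕ) + 1 then A₂ l j else 0)
        = A₂ ⟨(i : ℕ) + 1, hin⟩ j := by
      rw [Finset.sum_eq_single (⟨(i : ℕ) + 1, hin⟩ : Fin n)]
      · simp
      · intro l _ hl
        have : (l : ℕ) ≠ (i : ℕ) + 1 := by
          intro h; apply hl; exact Fin.ext h
        simp [this]
      · simp
    rw [h2, hA, hA, hT]
    have hne : ¬ ((i:ℕ) + 1 = n) := by omega
    rcases lt_trichotomy ((i:ℕ)) ((j:ℕ)) with h | h | h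
    · have h1 : (i:ℕ) ≤ j := le_of_lt h
      have h2 : (i:ℕ) + 1 ≤ j := h
      simp [h, h1, h2]
    · have heq : i = j := Fin.ext h
      have h1 : (i:ℕ) ≤ j := le_of_eq h
      have h2 : ¬ ((i:ℕ) + 1 ≤ j) := by omega
      have hne' : ¬ ((j:ℕ) + 1 = n) := by omega
      simp [heq, h1, h2, hne', Nat.not_lt.mpr h1, h]
    · have h1 : ¬ ((i:ℕ) ≤ j) := by omega
      have h2 : ¬ ((i:ℕ) + 1 ≤ j) := by omega
      have h3 : ¬ ((i:ℕ) < j) := by omega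
      have h4 : i ≠ j := by intro hh; rw [hh] at h; omega
      simp [h1, h2, h3, h4, hne]
      ring
  · have hin' : (i : ℕ) + 1 = n := by omega
    have h2 : (Finset.univ.sum fun l : Fin n => if (l : ℕ) = (i : ℕ) + 1 then A₂ l j else 0) = 0 := by
      apply Finset.sum_eq_zero
      intro l _
      have : (l : ℕ) ≠ (i : ℕ) + 1 := by omega
      simp [this]
    rw [h2, hA, hT]
    rcases lt_trichotomy ((i:ℕ)) ((j:ℕ)) with h | h | h
    · exact absurd (lt_of_lt_of_le h (by omega : (j:ℕ) ≤ i)) (lt_irrefl _)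
    · have heq : i = j := Fin.ext h
      have hjn : (j:ℕ) + 1 = n := by omega
      simp [heq, h, hjn, le_of_eq h]
    · have h1 : ¬ ((i:ℕ) ≤ j) := by omega
      have h3 : ¬ ((i:ℕ) < j) := by omega
      have h4 : i ≠ j := by intro hh; rw [hh] at h; omega
      simp [h1, h3, h4, hin']
end

section
/- Assume g_i ≠ 0 for 2 ≤ i ≤ n−1. Let E_1 be the n×n matrix with 1's on the diagonal, entries −1 on the superdiagonal (positions (i, i+1), 1 ≤ i ≤ n−1), and zeros elsewhere; let E_2 be the n×n matrix with 1's on the diagonal, entries −g_i/g_{i−1} in positions (i, i−1) for 3 ≤ i ≤ n−1, entry −k_n/g_{n−1} in position (n, n−1), and zeros elsewhere. Then E_2 · E_1 · A_2 is the lower bidiagonal matrix with main diagonal (c_1, c_2, …, c_{n−1}, k_n c_n), subdiagonal entry (2,1) equal to a_1 g_2, subdiagonal entries (i+1, i) equal to g_{i+1} k_i f_i / g_i for 2 ≤ i ≤ n−2, subdiagonal entry (n, n−1) equal to k_n k_{n−1} f_{n−1}/g_{n−1}, and all other entries 0. -/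
lemma two_term_sum {α M : Type*} [Fintype α] [DecidableEq α] [AddCommMonoid M]
    (fn : α → M) (s t : α) (hst : s ≠ t)
    (h : ∀ x, x ≠ s → x ≠ t → fn x = 0) : ∑ x, fn x = fn s + fn t := by
  rw [← Finset.sum_pair hst]
  apply (Finset.sum_subset (Finset.subset_univ _) ?_).symm
  intro x _ hx
  simp only [Finset.mem_insert, Finset.mem_singleton, not_or] at hx
  exact h x hx.1 hx.2

/-- With `gᵢ ≠ 0` for `2 ≤ i ≤ n-1`, the matrices `E₁` (unit
diagonal, superdiagonal `-1`'s) and `E₂` (unit diagonal, entries `-gᵢ/g_{i-1}`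
at `(i,i-1)` for `3 ≤ i ≤ n-1` and `-kₙ/g_{n-1}` at `(n,n-1)`) satisfy
`E₂ * E₁ * A₂ = L`, the stated lower bidiagonal matrix with main diagonal
`(c₁,…,c_{n-1}, kₙcₙ)`. -/
theorem stmt_16 {F : Type*} [Field F] {n : ℕ} (hn : 3 ≤ n)
    (a b k c f g : ℕ → F)
    (A₂ E₁ E₂ L : Matrix (Fin n) (Fin n) F)
    (hA : ∀ i j : Fin n, A₂ i j =
      if (i : ℕ) ≤ (j : ℕ) then k ((j : ℕ) + 1) * b ((j : ℕ) + 1)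
      else k ((i : ℕ) + 1) * a ((j : ℕ) + 1))
    (hc0 : c 0 = 1)
    (hc : ∀ i : ℕ, 1 ≤ i → i ≤ n - 1 → c i = k i * b i - k (i + 1) * a i)
    (hcn : c n = b n)
    (hf : ∀ i : ℕ, 2 ≤ i → i ≤ n - 1 → f i = a i - b i)
    (hg : ∀ i : ℕ, 2 ≤ i → i ≤ n - 1 → g i = k i - k (i + 1))
    (hgn : g n = 1)
    (hgne : ∀ i : ℕ, 2 ≤ i → i ≤ n - 1 → g i ≠ 0)
    (hE1 : ∀ i j : Fin n, E₁ i j =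
      if i = j then 1
      else if (j : ℕ) = (i : ℕ) + 1 then -1
      else 0)
    (hE2 : ∀ i j : Fin n, E₂ i j =
      if i = j then 1
      else if (i : ℕ) = (j : ℕ) + 1 ∧ 3 ≤ (i : ℕ) + 1 ∧ (i : ℕ) + 1 ≤ n - 1 then
        -(g ((i : ℕ) + 1) / g (i : ℕ))
      else if (i : ℕ) + 1 = n ∧ (j : ℕ) + 2 = n then -(k n / g (n - 1))
      else 0)
    (hL : ∀ i j : Fin n, L i j =
      if i = j then (if (i : ℕ) + 1 = n then k n * c n else c ((i : ℕ) + 1))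
      else if (i : ℕ) = (j : ℕ) + 1 then
        (if (j : ℕ) = 0 then a 1 * g 2
         else if (i : ℕ) + 1 = n then k n * k (n - 1) * f (n - 1) / g (n - 1)
         else g ((j : ℕ) + 2) * k ((j : ℕ) + 1) * f ((j : ℕ) + 1) / g ((j : ℕ) + 1))
      else 0) :
    E₂ * E₁ * A₂ = L := by
  have hM : ∀ (m j : Fin n), (E₁ * A₂) m j =
      A₂ m j - (if h : (m:ℕ)+1 < n then A₂ ⟨(m:ℕ)+1, h⟩ j else 0) := by
    intro m j
    rw [Matrix.mul_apply]
    by_cases h : (m:ℕ)+1 < n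
    · rw [two_term_sum _ m ⟨(m:ℕ)+1, h⟩ (by simp [Fin.ext_iff]) ?_]
      · rw [hE1, hE1, dif_pos h]
        simp [Fin.ext_iff]
        ring
      · intro x hx1 hx2
        rw [hE1, if_neg (fun e => hx1 e.symm), if_neg, zero_mul]
        exact fun e => hx2 (Fin.ext e)
    · rw [Finset.sum_eq_single m, dif_neg h, hE1, if_pos rfl, one_mul, sub_zero]
      · intro x _ hx
        rw [hE1, if_neg (fun e => hx e.symm), if_neg, zero_mul]
        intro e; omega
      · simp
  have key : ∀ i : ℕ, 2 ≤ i → i ≤ n - 1 → k i - k (i + 1) ≠ 0 := by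
    intro i h1 h2
    have := hgne i h1 h2
    rwa [hg i h1 h2] at this
  ext i j
  rw [Matrix.mul_assoc, Matrix.mul_apply]
  rcases i with ⟨iv, hiv⟩
  rcases j with ⟨jv, hjv⟩
  by_cases hi : 1 ≤ iv
  · have hi1 : iv - 1 < n := by omega
    rw [two_term_sum _ ⟨iv, hiv⟩ ⟨iv - 1, hi1⟩ (by simp [Fin.ext_iff]; omega) ?_]
    · rw [hE2, hE2, hM, hM, hL]
      simp only [hA]
      by_cases hlast : iv = n - 1
      · subst hlast
        have hne : k (n-1) - k n ≠ 0 := by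
          have := key (n-1) (by omega) (by omega)
          rwa [Nat.sub_add_cancel (by omega : 1 ≤ n)] at this
        have hne' : -k n + k (n - 1) ≠ 0 := fun h => hne (by linear_combination h)
        rcases show jv = n - 1 ∨ jv = n - 2 ∨ jv < n - 2 by omega with hj | hj | hj
        · subst hj
          simp (disch := omega) only [Fin.mk.injEq, true_and, and_true, if_true,
            if_false, if_pos, if_neg, dif_pos, dif_neg,
            show n - 1 + 1 = n from by omega, show 1 + (n - 1) = n from by omega,
            show n - 1 - 1 + 1 = n - 1 from by omega, hcn]
          first | ring1 | (field_simp [hne']; ring1)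
        · subst hj
          simp (disch := omega) only [Fin.mk.injEq, true_and, and_true, if_true,
            if_false, if_pos, if_neg, dif_pos, dif_neg,
            show n - 1 + 1 = n from by omega, show 1 + (n - 1) = n from by omega,
            show n - 2 + 1 = n - 1 from by omega,
            show 1 + (n - 2) = n - 1 from by omega,
            show n - 1 - 1 + 1 = n - 1 from by omega, hf, hg]
          first | ring1 | (field_simp [hne']; ring1)
        · simp (disch := omega) only [Fin.mk.injEq, true_and, and_true, if_true,
            if_false, if_pos, if_neg, dif_pos, dif_neg,
            show n - 1 + 1 = n from by omega, show 1 + (n - 1) = n from by omega,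
            show n - 1 - 1 + 1 = n - 1 from by omega, hg]
          first | ring1 | (field_simp [hne']; ring1)
      · by_cases hi2 : 2 ≤ iv
        · have hne : k iv - k (iv + 1) ≠ 0 := key iv (by omega) (by omega)
          have hne2 : k (iv + 1) - k (iv + 1 + 1) ≠ 0 := key (iv + 1) (by omega) (by omega)
          have hne' : -k (1 + iv) + k iv ≠ 0 := by
            intro h
            exact hne (by rw [show iv + 1 = 1 + iv from by omega]; linear_combination h)
          have hne2' : -k (2 + iv) + k (1 + iv) ≠ 0 := by
            intro h
            exact hne2 (by rw [show iv + 1 + 1 = 2 + iv from by omega,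
              show iv + 1 = 1 + iv from by omega]; linear_combination h)
          rcases show jv = iv ∨ jv = iv - 1 ∨ jv < iv - 1 ∨ jv > iv by omega
            with hj | hj | hj | hj
          · subst hj
            simp (disch := omega) only [Fin.mk.injEq, true_and, and_true, if_true,
              if_false, if_pos, if_neg, dif_pos, dif_neg,
              show jv - 1 + 1 = jv from by omega,
              show 1 + (jv - 1) = jv from by omega, hc]
            first
              | ring1
              | (field_simp [hne', hne2']
                 try simp only [show iv - 1 + 2 = iv + 1 from by omega,
                   show iv - 1 + 2 + 1 = iv + 1 + 1 from by omega]
                 ring1)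
          · subst hj
            simp (disch := omega) only [Fin.mk.injEq, true_and, and_true, if_true,
              if_false, if_pos, if_neg, dif_pos, dif_neg,
              show iv - 1 + 1 = iv from by omega,
              show 1 + (iv - 1) = iv from by omega,
              show 2 + (iv - 1) = 1 + iv from by omega,
              show 3 + (iv - 1) = 2 + iv from by omega, hf, hg, hc]
            first
              | ring1
              | (field_simp [hne', hne2']
                 try simp only [show iv - 1 + 2 = iv + 1 from by omega,
                   show iv - 1 + 2 + 1 = iv + 1 + 1 from by omega]
                 ring1)
          · simp (disch := omega) only [Fin.mk.injEq, true_and, and_true, if_true,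
              if_false, if_pos, if_neg, dif_pos, dif_neg,
              show iv - 1 + 1 = iv from by omega,
              show 1 + (iv - 1) = iv from by omega,
              show 2 + (iv - 1) = 1 + iv from by omega,
              show 3 + (iv - 1) = 2 + iv from by omega, hg]
            first
              | ring1
              | (field_simp [hne', hne2']
                 try simp only [show iv - 1 + 2 = iv + 1 from by omega,
                   show iv - 1 + 2 + 1 = iv + 1 + 1 from by omega]
                 ring1)
          · simp (disch := omega) only [Fin.mk.injEq, true_and, and_true, if_true,
              if_false, if_pos, if_neg, dif_pos, dif_neg,
              show iv - 1 + 1 = iv from by omega,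
              show 1 + (iv - 1) = iv from by omega]
            first
              | ring1
              | (field_simp [hne', hne2']
                 try simp only [show iv - 1 + 2 = iv + 1 from by omega,
                   show iv - 1 + 2 + 1 = iv + 1 + 1 from by omega]
                 ring1)
        · have h1 : iv = 1 := by omega
          subst h1
          rcases show jv = 0 ∨ jv = 1 ∨ 2 ≤ jv by omega with hj | hj | hj
          · subst hj
            simp (disch := omega) only [Fin.mk.injEq, true_and, and_true, if_true,
              if_false, if_pos, if_neg, dif_pos, dif_neg, hg]
            try first | ring1 | (field_simp; ring1)
          · subst hj
            simp (disch := omega) only [Fin.mk.injEq, true_and, and_true, if_true,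
              if_false, if_pos, if_neg, dif_pos, dif_neg, hc]
            try first | ring1 | (field_simp; ring1)
          · simp (disch := omega) only [Fin.mk.injEq, true_and, and_true, if_true,
              if_false, if_pos, if_neg, dif_pos, dif_neg]
            try first | ring1 | (field_simp; ring1)
    · intro x hx1 hx2
      rw [hE2]
      have h1 : ¬((⟨iv, hiv⟩ : Fin n) = x) := fun e => hx1 e.symm
      have hx2' : ¬((x : ℕ) = iv - 1) := fun e => hx2 (Fin.ext e)
      rw [if_neg h1, if_neg, if_neg, zero_mul]
      · rintro ⟨e1, e2⟩
        have e1' : iv + 1 = n := e1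
        have e2' : (x : ℕ) + 2 = n := e2
        exact hx2' (by omega)
      · rintro ⟨e1, _, _⟩
        have e1' : iv = (x : ℕ) + 1 := e1
        exact hx2' (by omega)
  · rw [Finset.sum_eq_single ⟨iv, hiv⟩]
    · rw [hE2, if_pos rfl, one_mul, hM, hL]
      simp only [hA]
      have h0 : iv = 0 := by omega
      subst h0
      rcases show jv = 0 ∨ 1 ≤ jv by omega with hj | hj
      · subst hj
        simp (disch := omega) only [Fin.mk.injEq, true_and, and_true, if_true,
          if_false, if_pos, if_neg, dif_pos, dif_neg, hc]
        try first | ring1 | (field_simp; ring1)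
      · simp (disch := omega) only [Fin.mk.injEq, true_and, and_true, if_true,
          if_false, if_pos, if_neg, dif_pos, dif_neg]
        try first | ring1 | (field_simp; ring1)
    · intro x _ hx
      rw [hE2, if_neg (fun e => hx e.symm), if_neg, if_neg, zero_mul]
      · rintro ⟨e1, e2⟩
        have e1' : iv + 1 = n := e1
        have e2' : (x : ℕ) + 2 = n := e2
        have hxn : (x : ℕ) < n := x.isLt
        omega
      · rintro ⟨e1, _, _⟩
        have e1' : iv = (x : ℕ) + 1 := e1
        omega
    · simp
end
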